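/- arXiv:1811.03137 — 4 statements merged into one kernel-verified Lean document; each statement's English description precedes it below -/
import Mathlib

section
/- Let m > 0, N ≥ 1, s ∈ ℕ, and let p, n ∈ ℕ with p ≠ n. Then ⟨H̃^N_{z̄^s} e_p, H̃^N_{z̄^s} e_n⟩ = 0 in L²(μ_m), where e_n(z) = (m^{(n+1)/2}/√(n!)) z^n. -/
open MeasureTheory Complex Polynomial Filter

noncomputable section

/-- The Gaussian measure `dμ_m(z) = (1/π) e^{-m|z|²} dA(z)` on `ℂ`. -/
def gaussMeasure (m : ℝ) : Measure ℂ :=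
  volume.withDensity fun z => ENNReal.ofReal ((1 / Real.pi) * Real.exp (-m * ‖z‖ ^ 2))

/-- The space `L²(μ_m)`. -/
abbrev Lp2 (m : ℝ) := Lp ℂ 2 (gaussMeasure m)

/-- The polyanalytic Fock space `F^{N,m}`, the `L²(μ_m)`-closure of
`span{ z̄^j z^k : 0 ≤ j ≤ N-1, k ∈ ℕ }`. -/
def polyFock (m : ℝ) (N : ℕ) : Submodule ℂ (Lp2 m) :=
  (Submodule.span ℂ {f : Lp2 m | ∃ j k : ℕ, j < N ∧
      (f : ℂ → ℂ) =ᵐ[gaussMeasure m] fun z => (starRingEnd ℂ) z ^ j * z ^ k}).topologicalClosure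

instance (m : ℝ) (N : ℕ) : CompleteSpace (polyFock m N) :=
  (Submodule.isClosed_topologicalClosure _).completeSpace_coe

/-- The operator `H̃^N_{ḡ}` applied to an analytic polynomial `p`:
`(I - P_{F^{N,m}})(ḡ p)`. -/
def tildeH (m : ℝ) (N : ℕ) (g : ℂ → ℂ) (p : Polynomial ℂ)
    (h : MemLp (fun z : ℂ => (starRingEnd ℂ) (g z) * p.eval z) 2 (gaussMeasure m)) : Lp2 m :=
  h.toLp _ - ((polyFock m N).orthogonalProjectionOnto (h.toLp _) : Lp2 m)

/-- The polynomial giving the normalized monomial basis element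
`e_n(z) = (m^{(n+1)/2}/√(n!)) z^n` of `𝓕_m`. -/
def fockBasisPoly (m : ℝ) (n : ℕ) : Polynomial ℂ :=
  Polynomial.C ((m ^ (((n : ℝ) + 1) / 2) / Real.sqrt (Nat.factorial n) : ℝ) : ℂ) *
    Polynomial.X ^ n

/-! ### Auxiliary material: the rotation unitary on `L²(μ_m)` -/

namespace TildeHAux

set_option maxHeartbeats 1000000

/-- Rotation by a unit complex number preserves the Gaussian measure. -/
lemma gauss_mp (m : ℝ) (a : Circle) :
    MeasurePreserving (fun z : ℂ => (a : ℂ) * z) (gaussMeasure m) (gaussMeasure m) := by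
  have hfun : ⇑(rotation a) = fun z : ℂ => (a : ℂ) * z := funext (rotation_apply a)
  have hvol : MeasurePreserving (fun z : ℂ => (a : ℂ) * z) volume volume := by
    have := (rotation a).measurePreserving
    rwa [hfun] at this
  have hemb : MeasurableEmbedding (fun z : ℂ => (a : ℂ) * z) := by
    have := (rotation a).toHomeomorph.toMeasurableEquiv.measurableEmbedding
    simpa [hfun] using this
  set g : ℂ → ENNReal :=
    fun z => ENNReal.ofReal ((1 / Real.pi) * Real.exp (-m * ‖z‖ ^ 2)) with hg
  have hgmeas : Measurable g := by
    apply Measurable.ennreal_ofReal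
    exact (Continuous.mul continuous_const
      (Real.continuous_exp.comp ((continuous_const.mul ((continuous_norm.pow 2)))))).measurable
  have hga : ∀ z : ℂ, g ((a : ℂ) * z) = g z := by
    intro z
    simp [hg, map_mul, Circle.norm_coe]
  refine ⟨hvol.measurable, ?_⟩
  ext s hs
  rw [Measure.map_apply hvol.measurable hs]
  show (volume.withDensity g) _ = (volume.withDensity g) s
  rw [withDensity_apply _ (hs.preimage hvol.measurable), withDensity_apply _ hs]
  calc ∫⁻ z in (fun z : ℂ => (a : ℂ) * z) ⁻¹' s, g z ∂volume
      = ∫⁻ z in (fun z : ℂ => (a : ℂ) * z) ⁻¹' s, g ((a : ℂ) * z) ∂volume := by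
        simp_rw [hga]
    _ = ∫⁻ z in s, g z ∂volume := hvol.setLIntegral_comp_preimage_emb hemb g s

/-- The unitary composition operator on `L²(μ_m)` induced by rotation. -/
def T (m : ℝ) (a : Circle) : Lp2 m →ₗᵢ[ℂ] Lp2 m :=
  Lp.compMeasurePreservingₗᵢ ℂ _ (gauss_mp m a)

lemma T_coeFn (m : ℝ) (a : Circle) (f : Lp2 m) :
    T m a f =ᵐ[gaussMeasure m] fun z => f ((a : ℂ) * z) :=
  Lp.coeFn_compMeasurePreserving f (gauss_mp m a)

lemma T_T_inv (m : ℝ) (a : Circle) (f : Lp2 m) : T m a (T m a⁻¹ f) = f := by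
  apply Lp.ext
  have h1 := T_coeFn m a (T m a⁻¹ f)
  have h2 := T_coeFn m a⁻¹ f
  have h3 := (gauss_mp m a).quasiMeasurePreserving.ae_eq_comp h2
  filter_upwards [h1, h3] with z hz1 hz3
  rw [hz1]
  have hz3' : (T m a⁻¹ f : ℂ → ℂ) ((a : ℂ) * z) =
      (f : ℂ → ℂ) ((a⁻¹ : Circle) * ((a : ℂ) * z)) := hz3
  rw [hz3', ← mul_assoc, Circle.coe_inv, inv_mul_cancel₀ (Circle.coe_ne_zero a), one_mul]

lemma T_mem_polyFock (m : ℝ) (N : ℕ) (a : Circle) {x : Lp2 m} (hx : x ∈ polyFock m N) :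
    T m a x ∈ polyFock m N := by
  set S : Set (Lp2 m) := {f : Lp2 m | ∃ j k : ℕ, j < N ∧
      (f : ℂ → ℂ) =ᵐ[gaussMeasure m] fun z => (starRingEnd ℂ) z ^ j * z ^ k} with hS
  set K := Submodule.span ℂ S with hK
  have hgen : ∀ f ∈ S, T m a f ∈ K := by
    rintro f ⟨j, k, hj, hf⟩
    set c : ℂ := (starRingEnd ℂ (a : ℂ)) ^ j * (a : ℂ) ^ k with hc
    have hc0 : c ≠ 0 := by
      apply mul_ne_zero <;> apply pow_ne_zero
      · simpa using (Circle.coe_ne_zero a)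
      · exact Circle.coe_ne_zero a
    have hmem : c⁻¹ • T m a f ∈ S := by
      refine ⟨j, k, hj, ?_⟩
      have h1 := Lp.coeFn_smul c⁻¹ (T m a f)
      have h2 := T_coeFn m a f
      have h3 := (gauss_mp m a).quasiMeasurePreserving.ae_eq_comp hf
      filter_upwards [h1, h2, h3] with z hz1 hz2 hz3
      rw [hz1]
      have hz3' : (f : ℂ → ℂ) ((a : ℂ) * z) =
          (starRingEnd ℂ) ((a : ℂ) * z) ^ j * ((a : ℂ) * z) ^ k := hz3
      simp only [Pi.smul_apply, smul_eq_mul, hz2, hz3', hc, map_mul, mul_pow]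
      field_simp
    have : T m a f = c • (c⁻¹ • T m a f) := by rw [smul_smul, mul_inv_cancel₀ hc0, one_smul]
    rw [this]
    exact Submodule.smul_mem _ _ (Submodule.subset_span hmem)
  have hKle : ∀ y ∈ K, T m a y ∈ K := by
    intro y hy
    have : K ≤ K.comap (T m a).toLinearMap := by
      rw [hK]
      exact Submodule.span_le.2 (fun f hf => hgen f hf)
    exact this hy
  have hx' : x ∈ closure (K : Set (Lp2 m)) := hx
  exact map_mem_closure (T m a).continuous hx' hKle

lemma proj_comm (m : ℝ) (N : ℕ) (a : Circle) (x : Lp2 m) :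
    ((polyFock m N).orthogonalProjectionOnto (T m a x) : Lp2 m) =
      T m a ((polyFock m N).orthogonalProjectionOnto x : Lp2 m) := by
  apply Submodule.eq_starProjection_of_mem_of_inner_eq_zero
  · exact T_mem_polyFock m N a (SetLike.coe_mem _)
  · intro w hw
    have hw' : T m a⁻¹ w ∈ polyFock m N := T_mem_polyFock m N a⁻¹ hw
    have hsub : x - ((polyFock m N).orthogonalProjectionOnto x : Lp2 m) ∈ (polyFock m N)ᗮ :=
      Submodule.sub_starProjection_mem_orthogonal x
    calc (inner ℂ (T m a x - T m a ((polyFock m N).orthogonalProjectionOnto x : Lp2 m))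
            w : ℂ)
        = inner ℂ (T m a (x - ((polyFock m N).orthogonalProjectionOnto x : Lp2 m)))
            (T m a (T m a⁻¹ w)) := by rw [map_sub, T_T_inv]
      _ = inner ℂ (x - ((polyFock m N).orthogonalProjectionOnto x : Lp2 m)) (T m a⁻¹ w) :=
          (T m a).inner_map_map _ _
      _ = 0 := Submodule.inner_left_of_mem_orthogonal hw' hsub

lemma T_toLp (m : ℝ) (a : Circle) (s k : ℕ)
    (h : MemLp (fun z : ℂ => (starRingEnd ℂ) (z ^ s) * (fockBasisPoly m k).eval z) 2
      (gaussMeasure m)) :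
    T m a (h.toLp _) = ((starRingEnd ℂ (a : ℂ)) ^ s * (a : ℂ) ^ k) • h.toLp _ := by
  set c : ℂ := (starRingEnd ℂ (a : ℂ)) ^ s * (a : ℂ) ^ k with hc
  apply Lp.ext
  have h1 := T_coeFn m a (h.toLp _)
  have h2 := h.coeFn_toLp
  have h3 := (gauss_mp m a).quasiMeasurePreserving.ae_eq_comp h2
  have h4 := Lp.coeFn_smul c (h.toLp _ : Lp2 m)
  filter_upwards [h1, h2, h3, h4] with z hz1 hz2 hz3 hz4
  rw [hz1, hz4]
  have hz3' : ((h.toLp _ : Lp2 m) : ℂ → ℂ) ((a : ℂ) * z) =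
      (starRingEnd ℂ) (((a : ℂ) * z) ^ s) * (fockBasisPoly m k).eval ((a : ℂ) * z) := hz3
  rw [hz3', Pi.smul_apply, smul_eq_mul, hz2, hc]
  simp only [fockBasisPoly, eval_mul, eval_pow, eval_C, eval_X, map_pow, map_mul, mul_pow]
  ring

lemma T_tildeH (m : ℝ) (N : ℕ) (a : Circle) (s k : ℕ)
    (h : MemLp (fun z : ℂ => (starRingEnd ℂ) (z ^ s) * (fockBasisPoly m k).eval z) 2
      (gaussMeasure m)) :
    T m a (tildeH m N (fun z => z ^ s) (fockBasisPoly m k) h) =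
      ((starRingEnd ℂ (a : ℂ)) ^ s * (a : ℂ) ^ k) •
        tildeH m N (fun z => z ^ s) (fockBasisPoly m k) h := by
  set c : ℂ := (starRingEnd ℂ (a : ℂ)) ^ s * (a : ℂ) ^ k with hc
  have key : T m a (h.toLp _) = c • h.toLp _ := T_toLp m a s k h
  calc T m a (tildeH m N (fun z => z ^ s) (fockBasisPoly m k) h)
      = T m a (h.toLp _) -
        T m a ((polyFock m N).orthogonalProjectionOnto (h.toLp _) : Lp2 m) := by
        rw [tildeH, map_sub]
    _ = T m a (h.toLp _) -
        ((polyFock m N).orthogonalProjectionOnto (T m a (h.toLp _)) : Lp2 m) := by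
        rw [proj_comm]
    _ = c • h.toLp _ -
        ((polyFock m N).orthogonalProjectionOnto (c • h.toLp _) : Lp2 m) := by rw [key]
    _ = c • (h.toLp _ - ((polyFock m N).orthogonalProjectionOnto (h.toLp _) : Lp2 m)) := by
        rw [_root_.map_smul, Submodule.coe_smul, smul_sub]
    _ = c • tildeH m N (fun z => z ^ s) (fockBasisPoly m k) h := rfl

end TildeHAux

/-- For `p ≠ n`, `⟨H̃^N_{z̄^s} e_p, H̃^N_{z̄^s} e_n⟩ = 0` in `L²(μ_m)`. -/
theorem tildeH_basis_orthogonal (m : ℝ) (hm : 0 < m) (N : ℕ) (hN : 1 ≤ N) (s : ℕ)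
    (p n : ℕ) (hpn : p ≠ n)
    (h1 : MemLp (fun z : ℂ => (starRingEnd ℂ) (z ^ s) * (fockBasisPoly m p).eval z) 2
      (gaussMeasure m))
    (h2 : MemLp (fun z : ℂ => (starRingEnd ℂ) (z ^ s) * (fockBasisPoly m n).eval z) 2
      (gaussMeasure m)) :
    (inner ℂ (tildeH m N (fun z => z ^ s) (fockBasisPoly m p) h1)
        (tildeH m N (fun z => z ^ s) (fockBasisPoly m n) h2) : ℂ) = 0 := by
  classical
  set d : ℤ := (n : ℤ) - p with hd
  have hd0 : d ≠ 0 := by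
    simp only [hd, sub_ne_zero]
    exact_mod_cast (Ne.symm hpn)
  set a : Circle := Circle.exp (Real.pi / d) with ha
  set a0 : ℂ := (a : ℂ) with ha0'
  have ha0 : a0 = Complex.exp (((Real.pi / d : ℝ) : ℂ) * Complex.I) := Circle.coe_exp _
  have ha0abs : ‖a0‖ = 1 := Circle.norm_coe a
  have ha0ne : a0 ≠ 0 := Circle.coe_ne_zero a
  have haa : (a : ℂ) = a0 := rfl
  -- conj a0 = a0⁻¹
  have hconj : (starRingEnd ℂ) a0 = a0⁻¹ := by
    have h := Complex.mul_conj a0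
    rw [Complex.normSq_eq_norm_sq, ha0abs] at h
    have : a0 * (starRingEnd ℂ) a0 = 1 := by rw [h]; norm_num
    field_simp [ha0ne] at this ⊢
    linear_combination this
  -- a0 ^ d = -1
  have hzpow : a0 ^ d = -1 := by
    rw [ha0, ← Complex.exp_int_mul]
    have : (d : ℂ) * (((Real.pi / d : ℝ) : ℂ) * Complex.I) = (Real.pi : ℂ) * Complex.I := by
      push_cast
      have hdC : (d : ℂ) ≠ 0 := Int.cast_ne_zero.2 hd0
      field_simp
    rw [this, Complex.exp_pi_mul_I]
  set A := tildeH m N (fun z => z ^ s) (fockBasisPoly m p) h1 with hA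
  set B := tildeH m N (fun z => z ^ s) (fockBasisPoly m n) h2 with hB
  set cp : ℂ := (starRingEnd ℂ) a0 ^ s * a0 ^ p with hcp
  set cn : ℂ := (starRingEnd ℂ) a0 ^ s * a0 ^ n with hcn
  have hTA : TildeHAux.T m a A = cp • A := TildeHAux.T_tildeH m N a s p h1
  have hTB : TildeHAux.T m a B = cn • B := TildeHAux.T_tildeH m N a s n h2
  have key : (inner ℂ A B : ℂ) = (starRingEnd ℂ) cp * cn * inner ℂ A B := by
    conv_lhs => rw [← (TildeHAux.T m a).inner_map_map A B, hTA, hTB,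
      inner_smul_left, inner_smul_right]
    ring
  -- compute the scalar: conj cp * cn = a0 ^ d = -1
  have hscal : (starRingEnd ℂ) cp * cn = a0 ^ d := by
    rw [hcp, hcn, map_mul, map_pow, map_pow, Complex.conj_conj, hconj]
    rw [inv_pow, inv_pow]
    rw [show a0 ^ d = a0 ^ ((n : ℤ) - p) from by rw [hd]]
    rw [zpow_sub₀ ha0ne, zpow_natCast, zpow_natCast]
    field_simp
  rw [hscal, hzpow] at key
  have : (2 : ℂ) * inner ℂ A B = 0 := by linear_combination key
  have h2ne : (2 : ℂ) ≠ 0 := by norm_num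
  exact (mul_eq_zero.1 this).resolve_left h2ne
end
end

section
/- Let s, n, r ∈ ℕ with n ≥ s. Then ∫_0^∞ y^n L_r^{n−s}(y) e^{−y} dy = (−1)^r · (s! (r+n−s)!/r!) · binom(n, s−r), where binom(n, s−r) is interpreted as 0 when s − r > n or r > s. -/
open MeasureTheory Complex Polynomial Filter

section Aux
open MeasureTheory Set

lemma intble (a : ℕ) :
    IntegrableOn (fun y : ℝ => y ^ a * Real.exp (-y)) (Set.Ioi 0) := by
  have h := Real.GammaIntegral_convergent (s := (a : ℝ) + 1) (by positivity)
  refine h.congr_fun (fun x hx => ?_) measurableSet_Ioi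
  beta_reduce
  rw [add_sub_cancel_right, Real.rpow_natCast, mul_comm]

lemma int_pow_exp (a : ℕ) :
    ∫ y in Set.Ioi (0 : ℝ), y ^ a * Real.exp (-y) = (a.factorial : ℝ) := by
  have h := Real.Gamma_eq_integral (s := (a : ℝ) + 1) (by positivity)
  rw [Real.Gamma_nat_eq_factorial] at h
  rw [h]
  refine setIntegral_congr_fun measurableSet_Ioi (fun x hx => ?_)
  beta_reduce
  rw [add_sub_cancel_right, Real.rpow_natCast, mul_comm]

lemma key (s : ℕ) : ∀ n r : ℕ, s ≤ n →
    ∑ j ∈ Finset.range (r + 1),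
      (-1 : ℝ) ^ j * ((n + r - s).choose j) * ((n + r - j).choose n) = (s.choose r : ℝ) := by
  induction s with
  | zero =>
    intro n r _
    have hterm : ∀ j ∈ Finset.range (r + 1),
        (-1 : ℝ) ^ j * ((n + r - 0).choose j) * ((n + r - j).choose n)
          = ((n + r).choose n : ℝ) * ((-1 : ℝ) ^ j * (r.choose j)) := by
      intro j hj
      rw [Finset.mem_range] at hj
      have hj' : j ≤ r := Nat.lt_succ_iff.mp hj
      have h1 : (n + r).choose (n + r - j) * (n + r - j).choose n
          = (n + r).choose n * ((n + r - n).choose (n + r - j - n)) :=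
        Nat.choose_mul (by omega)
      have h2 : n + r - j - n = r - j := by omega
      have h3 : (n + r).choose (n + r - j) = (n + r).choose j := by
        have : n + r - (n + r - j) = j := by omega
        rw [← this]; exact Nat.choose_symm (by omega)
      rw [h3, h2] at h1
      have h4 : n + r - n = r := by omega
      rw [h4] at h1
      have h5 : r.choose (r - j) = r.choose j := Nat.choose_symm hj'
      have h6 : (n + r - 0).choose j = (n + r).choose j := by norm_num
      rw [h6]
      have : ((n + r).choose j : ℝ) * ((n + r - j).choose n : ℝ)
          = ((n + r).choose n : ℝ) * (r.choose j : ℝ) := by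
        rw [← Nat.cast_mul, ← Nat.cast_mul, h1]
        norm_cast
        rw [← h5]
      calc (-1 : ℝ) ^ j * ((n + r).choose j) * ((n + r - j).choose n)
          = (-1 : ℝ) ^ j * (((n + r).choose j : ℝ) * ((n + r - j).choose n : ℝ)) := by ring
        _ = ((n + r).choose n : ℝ) * ((-1 : ℝ) ^ j * (r.choose j)) := by rw [this]; ring
    rw [Finset.sum_congr rfl hterm, ← Finset.mul_sum]
    have halt : ∑ j ∈ Finset.range (r + 1), (-1 : ℝ) ^ j * (r.choose j : ℝ)
        = if r = 0 then 1 else 0 := by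
      have h := Int.alternating_sum_range_choose (n := r)
      have := congrArg (fun z : ℤ => (z : ℝ)) h
      push_cast at this
      convert this using 2
    rw [halt]
    rcases Nat.eq_zero_or_pos r with hr | hr
    · subst hr; simp
    · rw [if_neg hr.ne', mul_zero, Nat.choose_eq_zero_of_lt hr, Nat.cast_zero]
  | succ s ih =>
    intro n r hsn
    match r with
    | 0 => simp
    | (t + 1) =>
      obtain ⟨m, rfl⟩ : ∃ m, n = m + 1 := ⟨n - 1, by omega⟩
      have hsplit : ∀ j ∈ Finset.range (t + 2),
          (-1 : ℝ) ^ j * ((m + 1 + (t + 1) - (s + 1)).choose j) * ((m + 1 + (t + 1) - j).choose (m + 1))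
            = (-1 : ℝ) ^ j * ((m + (t + 1) - s).choose j) * ((m + (t + 1) - j).choose m)
              + (-1 : ℝ) ^ j * ((m + 1 + t - s).choose j) * ((m + t + 1 - j).choose (m + 1)) := by
        intro j hj
        rw [Finset.mem_range] at hj
        have h1 : m + 1 + (t + 1) - j = (m + (t + 1) - j) + 1 := by omega
        have h2 : m + (t + 1) - j = (m + t - j) + 1 ∨ j = t + 1 := by omega
        have h3 : m + 1 + (t + 1) - (s + 1) = m + (t + 1) - s := by omega
        have h4 : m + (t + 1) - s = m + 1 + t - s := by omega
        rw [h1, h3, Nat.choose_succ_succ' (m + (t + 1) - j) m]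
        have h5 : m + t + 1 - j = m + (t + 1) - j := by omega
        rw [h5, h4]
        push_cast
        ring
      rw [Finset.sum_congr rfl hsplit, Finset.sum_add_distrib]
      have e1 : ∑ j ∈ Finset.range (t + 2),
          (-1 : ℝ) ^ j * ((m + (t + 1) - s).choose j) * ((m + (t + 1) - j).choose m)
            = (s.choose (t + 1) : ℝ) := ih m (t + 1) (by omega)
      have e2 : ∑ j ∈ Finset.range (t + 2),
          (-1 : ℝ) ^ j * ((m + 1 + t - s).choose j) * ((m + t + 1 - j).choose (m + 1))
            = (s.choose t : ℝ) := by
        rw [Finset.sum_range_succ]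
        have hz : m + t + 1 - (t + 1) = m := by omega
        rw [hz, Nat.choose_succ_self, Nat.cast_zero, mul_zero, add_zero]
        have := ih (m + 1) t (by omega)
        rw [← this]
        refine Finset.sum_congr rfl fun j hj => ?_
        congr 3 <;> omega
      rw [e1, e2, Nat.choose_succ_succ' s t]
      push_cast; ring

end Aux

noncomputable section

/-- The generalized Laguerre polynomial
`L_k^α(x) = Σ_{i=0}^k (-1)^i binom(k+α, k-i) x^i / i!`. -/
def laguerre (k : ℕ) (α : ℕ) (x : ℝ) : ℝ :=
  ∑ i ∈ Finset.range (k + 1), (-1 : ℝ) ^ i * ((k + α).choose (k - i)) * x ^ i / (Nat.factorial i)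

/-- `I_{a,b,c} = ∫_0^∞ y^a L_b^c(y) e^{-y} dy`. -/
def Iint (a b c : ℕ) : ℝ :=
  ∫ y in Set.Ioi (0 : ℝ), y ^ a * laguerre b c y * Real.exp (-y)

/-- For `n ≥ s`,
`∫_0^∞ y^n L_r^{n-s}(y) e^{-y} dy = (-1)^r (s!(r+n-s)!/r!) binom(n, s-r)`,
where the binomial coefficient is interpreted as `0` when `s - r > n` or `r > s`. -/
theorem laguerre_integral_eq (s n r : ℕ) (hsn : s ≤ n) :
    ∫ y in Set.Ioi (0 : ℝ), y ^ n * laguerre r (n - s) y * Real.exp (-y) =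
      (-1 : ℝ) ^ r *
        ((Nat.factorial s : ℝ) * (Nat.factorial (r + n - s) : ℝ) / (Nat.factorial r : ℝ)) *
        (if r ≤ s then (n.choose (s - r) : ℝ) else 0) := by
  have hm : r + (n - s) = n + r - s := by omega
  have step1 : ∀ y ∈ Set.Ioi (0 : ℝ),
      y ^ n * laguerre r (n - s) y * Real.exp (-y)
        = ∑ i ∈ Finset.range (r + 1),
            ((-1 : ℝ) ^ i * ((n + r - s).choose (r - i)) / (Nat.factorial i))
              * (y ^ (n + i) * Real.exp (-y)) := by
    intro y _
    rw [laguerre, hm, Finset.mul_sum, Finset.sum_mul]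
    refine Finset.sum_congr rfl fun i _ => ?_
    rw [pow_add]; ring
  rw [setIntegral_congr_fun measurableSet_Ioi step1,
    integral_finset_sum _ (fun i _ => ((intble (n + i)).const_mul _))]
  simp_rw [integral_const_mul, int_pow_exp]
  -- now pure algebra
  have hrefl := Finset.sum_range_reflect
    (fun i => ((-1 : ℝ) ^ i * ((n + r - s).choose (r - i)) / (Nat.factorial i))
      * ((n + i).factorial : ℝ)) (r + 1)
  rw [← hrefl]
  have hterm : ∀ j ∈ Finset.range (r + 1),
      ((-1 : ℝ) ^ (r + 1 - 1 - j) * ((n + r - s).choose (r - (r + 1 - 1 - j)))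
          / (Nat.factorial (r + 1 - 1 - j))) * ((n + (r + 1 - 1 - j)).factorial : ℝ)
        = ((-1 : ℝ) ^ r * (n.factorial : ℝ))
            * ((-1 : ℝ) ^ j * ((n + r - s).choose j) * ((n + r - j).choose n)) := by
    intro j hj
    rw [Finset.mem_range] at hj
    have hj' : j ≤ r := Nat.lt_succ_iff.mp hj
    have h1 : r + 1 - 1 - j = r - j := by omega
    have h2 : r - (r - j) = j := by omega
    have h3 : n + (r - j) = n + r - j := by omega
    rw [h1, h2, h3]
    have hfac : ((n + r - j).choose n : ℝ) * (n.factorial : ℝ) * ((r - j).factorial : ℝ)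
        = ((n + r - j).factorial : ℝ) := by
      have := Nat.choose_mul_factorial_mul_factorial (n := n + r - j) (k := n) (by omega)
      have h4 : n + r - j - n = r - j := by omega
      rw [h4] at this
      exact_mod_cast congrArg (fun z : ℕ => (z : ℝ)) this
    have hsign : (-1 : ℝ) ^ (r - j) = (-1 : ℝ) ^ r * (-1 : ℝ) ^ j := by
      have : (-1 : ℝ) ^ (r - j) * (-1 : ℝ) ^ j = (-1 : ℝ) ^ r := by
        rw [← pow_add]; congr 1; omega
      have hj2 : (-1 : ℝ) ^ j * (-1 : ℝ) ^ j = 1 := by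
        rw [← pow_add, ← two_mul, pow_mul]; norm_num
      linear_combination ((-1:ℝ)^j) * this - ((-1:ℝ)^(r-j)) * hj2
    have hfz : ((r - j).factorial : ℝ) ≠ 0 := Nat.cast_ne_zero.mpr (Nat.factorial_ne_zero _)
    field_simp
    rw [hsign, ← hfac]
    ring
  rw [Finset.sum_congr rfl hterm, ← Finset.mul_sum, key s n r hsn]
  -- final numeric identity
  rcases le_or_gt r s with hrs | hrs
  · rw [if_pos hrs]
    have h1 : s.choose r * r.factorial * (s - r).factorial = s.factorial :=
      Nat.choose_mul_factorial_mul_factorial hrs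
    have h2 : n.choose (s - r) * (s - r).factorial * (r + n - s).factorial = n.factorial := by
      have := Nat.choose_mul_factorial_mul_factorial (n := n) (k := s - r) (by omega)
      have h4 : n - (s - r) = r + n - s := by omega
      rwa [h4] at this
    have h1' : (s.choose r : ℝ) * (r.factorial : ℝ) * ((s - r).factorial : ℝ) = (s.factorial : ℝ) := by
      exact_mod_cast congrArg (fun z : ℕ => (z : ℝ)) h1
    have h2' : (n.choose (s - r) : ℝ) * ((s - r).factorial : ℝ) * ((r + n - s).factorial : ℝ)
        = (n.factorial : ℝ) := by
      exact_mod_cast congrArg (fun z : ℕ => (z : ℝ)) h2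
    have hr0 : (r.factorial : ℝ) ≠ 0 := Nat.cast_ne_zero.mpr (Nat.factorial_ne_zero _)
    have hsr0 : ((s - r).factorial : ℝ) ≠ 0 := Nat.cast_ne_zero.mpr (Nat.factorial_ne_zero _)
    field_simp
    refine mul_right_cancel₀ hsr0 ?_
    linear_combination ((n.factorial : ℝ)) * h1' - ((s.factorial : ℝ)) * h2'
  · rw [if_neg (not_le.mpr hrs), Nat.choose_eq_zero_of_lt hrs]
    simp
end
end

section
/- Let m > 0, N ≥ 1, and s, n ∈ ℕ with n ≥ s. Then (m^{n+1}/n!) · ⟨z̄^s z^n, P_{F^{N,m}}(z̄^s z^n)⟩_{L²(μ_m)} = (s!/m^s) · Σ_{r=0}^{N−1} binom(n, s−r) · binom(s, r), where binomial coefficients with negative or out-of-range arguments are interpreted as 0. -/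
open MeasureTheory Complex Polynomial Filter

noncomputable section

namespace ProofAux

/-- The Gaussian weight. -/
def gw (m : ℝ) (z : ℂ) : ℝ := (1 / Real.pi) * Real.exp (-m * ‖z‖ ^ 2)

lemma gw_nonneg (m : ℝ) (z : ℂ) : 0 ≤ gw m z := by
  have := Real.pi_pos
  unfold gw
  positivity

lemma gw_meas (m : ℝ) : Measurable (gw m) := by
  unfold gw
  exact measurable_const.mul (Real.measurable_exp.comp
    (measurable_const.mul (continuous_norm.measurable.pow_const 2)))

lemma gauss_eq (m : ℝ) :
    gaussMeasure m = volume.withDensity fun z => ((gw m z).toNNReal : ENNReal) := rfl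

lemma integral_gauss (m : ℝ) (f : ℂ → ℂ) :
    ∫ z, f z ∂gaussMeasure m = ∫ z, (gw m z : ℂ) * f z ∂volume := by
  rw [gauss_eq m, integral_withDensity_eq_integral_smul
    (f := fun z => (gw m z).toNNReal) ((gw_meas m).real_toNNReal) f]
  congr 1
  ext z
  rw [NNReal.smul_def, Real.coe_toNNReal _ (gw_nonneg m z), Complex.real_smul]

lemma gw_rot (m : ℝ) (c z : ℂ) (hc : ‖c‖ = 1) : gw m (c * z) = gw m z := by
  unfold gw
  rw [norm_mul, hc, one_mul]

lemma J_offdiag (m : ℝ) {p q : ℕ} (hpq : p ≠ q) :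
    ∫ z, (starRingEnd ℂ) z ^ p * z ^ q ∂gaussMeasure m = 0 := by
  rw [integral_gauss]
  set t : ℝ := Real.pi / ((q : ℝ) - (p : ℝ)) with ht
  have hqp : (q : ℝ) - (p : ℝ) ≠ 0 := by
    intro hcon
    exact hpq (Nat.cast_injective (by linarith : (p:ℝ) = (q:ℝ)))
  set a : Circle := Circle.exp t with ha
  have hrot := (rotation a).measurePreserving.integral_comp
    (rotation a).toHomeomorph.measurableEmbedding
    (fun z => (gw m z : ℂ) * ((starRingEnd ℂ) z ^ p * z ^ q))
  have hfac : ((starRingEnd ℂ) (a : ℂ)) ^ p * (a : ℂ) ^ q = -1 := by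
    have hco : (a : ℂ) = Complex.exp (t * Complex.I) := Circle.coe_exp t
    rw [hco, ← Complex.exp_conj]
    have h2 : (starRingEnd ℂ) ((t : ℂ) * Complex.I) = -((t:ℂ) * Complex.I) := by
      simp [Complex.conj_I, Complex.conj_ofReal, mul_comm]
    rw [h2, ← Complex.exp_nat_mul, ← Complex.exp_nat_mul, ← Complex.exp_add]
    have h3 : (p : ℂ) * -((t:ℂ) * Complex.I) + (q : ℂ) * ((t:ℂ) * Complex.I)
        = (((q : ℝ) - (p : ℝ)) * t : ℝ) * Complex.I := by
      push_cast; ring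
    rw [h3, ht, mul_div_cancel₀ _ hqp]
    exact Complex.exp_pi_mul_I
  have key : ∫ z, (gw m z : ℂ) * ((starRingEnd ℂ) z ^ p * z ^ q) ∂volume
      = -1 * ∫ z, (gw m z : ℂ) * ((starRingEnd ℂ) z ^ p * z ^ q) ∂volume := by
    nth_rewrite 1 [← hrot]
    rw [← integral_const_mul]
    congr 1
    ext z
    have habs : ‖(a : ℂ)‖ = 1 := Circle.norm_coe a
    rw [rotation_apply, gw_rot m _ z habs, map_mul, mul_pow, mul_pow, ← hfac]
    ring
  linear_combination (2⁻¹ : ℂ) * key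

lemma moment_real (m : ℝ) (hm : 0 < m) (k : ℕ) :
    ∫ z : ℂ, gw m z * ‖z‖ ^ (2 * k) ∂volume
      = (k.factorial : ℝ) / m ^ (k + 1) := by
  have h1 : ∀ z : ℂ, gw m z * ‖z‖ ^ (2 * k)
      = (1 / Real.pi) * (‖z‖ ^ ((2 * k : ℕ) : ℝ) * Real.exp (-m * ‖z‖ ^ (2:ℝ))) := by
    intro z
    rw [Real.rpow_natCast, Real.rpow_two]
    unfold gw
    ring
  simp_rw [h1]
  rw [integral_const_mul, Complex.integral_rpow_mul_exp_neg_mul_rpow (by norm_num : (1:ℝ) ≤ 2)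
    (lt_of_lt_of_le (by norm_num) (Nat.cast_nonneg _) : (-2:ℝ) < ((2*k : ℕ):ℝ)) hm]
  have h2 : (-(((2 * k : ℕ):ℝ) + 2) / 2 : ℝ) = -((k:ℝ) + 1) := by push_cast; ring
  have h3 : ((((2 * k : ℕ):ℝ) + 2) / 2 : ℝ) = (k:ℝ) + 1 := by push_cast; ring
  rw [h2, h3]
  have h4 : m ^ (-((k:ℝ)+1)) = (m ^ (k+1) : ℝ)⁻¹ := by
    rw [← Real.rpow_natCast m (k+1), ← Real.rpow_neg hm.le]
    push_cast
    ring_nf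
  have h5 : Real.Gamma ((k:ℝ) + 1) = k.factorial := by
    exact_mod_cast Real.Gamma_nat_eq_factorial k
  rw [h4, h5]
  have hπ := Real.pi_ne_zero
  field_simp

lemma J_diag (m : ℝ) (hm : 0 < m) (p : ℕ) :
    ∫ z, (starRingEnd ℂ) z ^ p * z ^ p ∂gaussMeasure m
      = (((p.factorial : ℝ) / m ^ (p + 1) : ℝ) : ℂ) := by
  rw [integral_gauss]
  have h1 : ∀ z : ℂ, (gw m z : ℂ) * ((starRingEnd ℂ) z ^ p * z ^ p)
      = ((gw m z * ‖z‖ ^ (2 * p) : ℝ) : ℂ) := by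
    intro z
    have : (starRingEnd ℂ) z ^ p * z ^ p = ((‖z‖ ^ (2*p) : ℝ) : ℂ) := by
      rw [← mul_pow]
      rw [show (starRingEnd ℂ) z * z = ((Complex.normSq z : ℝ) : ℂ) by
        rw [mul_comm, Complex.mul_conj]]
      rw [show ‖z‖ ^ (2*p) = Complex.normSq z ^ p by
        rw [pow_mul, Complex.sq_norm]]
      push_cast
      ring
    rw [this]
    push_cast
    ring
  calc ∫ z, (gw m z : ℂ) * ((starRingEnd ℂ) z ^ p * z ^ p) ∂volume
      = ∫ z, ((gw m z * ‖z‖ ^ (2*p) : ℝ) : ℂ) ∂volume := by simp_rw [h1]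
    _ = ((∫ z : ℂ, gw m z * ‖z‖ ^ (2*p) ∂volume : ℝ) : ℂ) := integral_ofReal
    _ = _ := by rw [moment_real m hm p]

lemma integrable_gw_pow (m : ℝ) (hm : 0 < m) (k : ℕ) :
    Integrable (fun z : ℂ => gw m z * ‖z‖ ^ k) volume := by
  set b : ℝ := m / 2 with hb
  have hbpos : 0 < b := by positivity
  set C : ℝ := (1 / Real.pi) * (1 + k.factorial * b⁻¹ ^ k) with hC
  have hmaj : Integrable (fun z : ℂ =>
      C * (Real.exp (-b * z.re ^ 2) * Real.exp (-b * z.im ^ 2))) volume := by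
    have h2 : Integrable (fun p : ℝ × ℝ =>
        Real.exp (-b * p.1 ^ 2) * Real.exp (-b * p.2 ^ 2)) (volume : Measure (ℝ × ℝ)) := by
      rw [Measure.volume_eq_prod]
      exact (integrable_exp_neg_mul_sq hbpos).mul_prod (integrable_exp_neg_mul_sq hbpos)
    have h3 := (Complex.volume_preserving_equiv_real_prod.integrable_comp_emb
      Complex.measurableEquivRealProd.measurableEmbedding).2 h2
    have h4 : ((fun p : ℝ × ℝ => Real.exp (-b * p.1 ^ 2) * Real.exp (-b * p.2 ^ 2)) ∘
        Complex.measurableEquivRealProd)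
        = fun z : ℂ => Real.exp (-b * z.re ^ 2) * Real.exp (-b * z.im ^ 2) := by
      ext z
      simp [Complex.measurableEquivRealProd, Function.comp]
    rw [h4] at h3
    exact h3.const_mul C
  refine hmaj.mono' ?_ ?_
  · exact ((gw_meas m).mul
      ((continuous_norm.measurable).pow_const k)).aestronglyMeasurable
  · refine Filter.Eventually.of_forall fun z => ?_
    have hnn : 0 ≤ gw m z * ‖z‖ ^ k := by
      have := gw_nonneg m z
      positivity
    rw [Real.norm_of_nonneg hnn]
    set t : ℝ := ‖z‖ with htdef
    have ht : 0 ≤ t := norm_nonneg z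
    have hsplit : Real.exp (-b * z.re ^ 2) * Real.exp (-b * z.im ^ 2)
        = Real.exp (-b * t ^ 2) := by
      rw [← Real.exp_add]
      congr 1
      have : t ^ 2 = z.re ^ 2 + z.im ^ 2 := by
        rw [htdef, Complex.sq_norm, Complex.normSq_apply]; ring
      rw [this]; ring
    rw [hsplit]
    -- key pointwise bound
    have hexp : t ^ (2 * k) ≤ k.factorial * b⁻¹ ^ k * Real.exp (b * t ^ 2) := by
      have h5 := Real.pow_div_factorial_le_exp (b * t ^ 2) (by positivity) k
      have h6 : (b * t ^ 2) ^ k = b ^ k * t ^ (2 * k) := by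
        rw [mul_pow, pow_mul]
      rw [div_le_iff₀ (by positivity : (0:ℝ) < (k.factorial : ℝ))] at h5
      have h7 : t ^ (2*k) = b⁻¹ ^ k * (b * t ^ 2) ^ k := by
        rw [h6]
        rw [← mul_assoc, ← mul_pow, inv_mul_cancel₀ hbpos.ne', one_pow, one_mul]
      rw [h7]
      calc b⁻¹ ^ k * (b * t ^ 2) ^ k
          ≤ b⁻¹ ^ k * (Real.exp (b * t ^ 2) * k.factorial) := by
            apply mul_le_mul_of_nonneg_left h5 (by positivity)
        _ = k.factorial * b⁻¹ ^ k * Real.exp (b * t ^ 2) := by ring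
    have htk : t ^ k ≤ 1 + t ^ (2 * k) := by
      rcases le_total t 1 with h | h
      · have : t ^ k ≤ 1 := pow_le_one₀ ht h
        have : (0:ℝ) ≤ t ^ (2*k) := by positivity
        linarith
      · have : t ^ k ≤ t ^ (2 * k) := pow_le_pow_right₀ h (by omega)
        linarith
    have hgw : gw m z = (1 / Real.pi) * Real.exp (-m * t ^ 2) := rfl
    rw [hgw]
    have hπ : (0:ℝ) < 1 / Real.pi := by have := Real.pi_pos; positivity
    have hmain : Real.exp (-m * t ^ 2) * t ^ k
        ≤ (1 + k.factorial * b⁻¹ ^ k) * Real.exp (-b * t ^ 2) := by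
      have e1 : Real.exp (-m * t ^ 2) * t ^ k
          ≤ Real.exp (-m * t ^ 2) * (1 + t ^ (2*k)) :=
        mul_le_mul_of_nonneg_left htk (Real.exp_nonneg _)
      have e2 : Real.exp (-m * t ^ 2) * (1 + t ^ (2*k))
          ≤ Real.exp (-m * t^2) + Real.exp (-m * t^2) * (k.factorial * b⁻¹ ^ k *
              Real.exp (b * t ^ 2)) := by
        have := mul_le_mul_of_nonneg_left hexp (Real.exp_nonneg (-m * t^2))
        linarith
      have e0 : Real.exp (-m * t ^ 2) * Real.exp (b * t ^ 2) = Real.exp (-b * t ^ 2) := by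
        rw [← Real.exp_add]
        congr 1
        rw [hb]; ring
      have e3 : Real.exp (-m * t^2) * (k.factorial * b⁻¹ ^ k * Real.exp (b * t ^ 2))
          = k.factorial * b⁻¹ ^ k * Real.exp (-b * t ^ 2) := by
        rw [← e0]; ring
      have e4 : Real.exp (-m * t ^ 2) ≤ Real.exp (-b * t ^ 2) := by
        apply Real.exp_le_exp.2
        nlinarith [sq_nonneg t]
      calc Real.exp (-m * t ^ 2) * t ^ k ≤ _ := e1
        _ ≤ _ := e2
        _ = Real.exp (-m * t^2) + k.factorial * b⁻¹ ^ k * Real.exp (-b * t ^ 2) := by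
            rw [e3]
        _ ≤ (1 + k.factorial * b⁻¹ ^ k) * Real.exp (-b * t ^ 2) := by
            have hf : (0:ℝ) ≤ (k.factorial : ℝ) * b⁻¹ ^ k := by positivity
            nlinarith [Real.exp_nonneg (-b * t^2)]
    calc (1 / Real.pi) * Real.exp (-m * t ^ 2) * t ^ k
        = (1 / Real.pi) * (Real.exp (-m * t ^ 2) * t ^ k) := by ring
      _ ≤ (1 / Real.pi) * ((1 + k.factorial * b⁻¹ ^ k) * Real.exp (-b * t ^ 2)) := by
          apply mul_le_mul_of_nonneg_left hmain hπ.le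
      _ = C * Real.exp (-b * t ^ 2) := by rw [hC]; ring

lemma memLp_mono (m : ℝ) (hm : 0 < m) (a b : ℕ) :
    MemLp (fun z : ℂ => (starRingEnd ℂ) z ^ a * z ^ b) 2 (gaussMeasure m) := by
  have hmeas : AEStronglyMeasurable (fun z : ℂ => (starRingEnd ℂ) z ^ a * z ^ b)
      (gaussMeasure m) := by
    apply Continuous.aestronglyMeasurable
    exact ((Complex.continuous_conj).pow a).mul (continuous_pow b)
  rw [memLp_two_iff_integrable_sq_norm hmeas]
  have h1 : (fun z : ℂ => ‖(starRingEnd ℂ) z ^ a * z ^ b‖ ^ 2)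
      = fun z : ℂ => ‖z‖ ^ (2 * (a + b)) := by
    ext z
    rw [norm_mul, norm_pow, norm_pow, Complex.norm_conj]
    rw [← pow_add, ← pow_mul]
    ring_nf
  rw [h1, gauss_eq]
  rw [integrable_withDensity_iff_integrable_smul ((gw_meas m).real_toNNReal)]
  have h2 : (fun z : ℂ => (gw m z).toNNReal • ‖z‖ ^ (2 * (a+b)))
      = fun z : ℂ => gw m z * ‖z‖ ^ (2 * (a + b)) := by
    ext z
    rw [NNReal.smul_def, Real.coe_toNNReal _ (gw_nonneg m z), smul_eq_mul]
  rw [h2]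
  exact integrable_gw_pow m hm (2 * (a + b))


/-! ### Combinatorial identities -/

/-- alternating binomial sum `S(j,a,x) = ∑_{i=0}^{j} (-1)^i C(j,i) C(x-i,a)` -/
def binomS (j a x : ℕ) : ℂ :=
  ∑ i ∈ Finset.range (j+1), (-1 : ℂ)^i * (j.choose i) * ((x - i).choose a)

lemma alt_helper (j : ℕ) (F : ℕ → ℂ) :
    ∑ i ∈ Finset.range (j+2), (-1:ℂ)^i * ((j+1).choose i) * F i
      = ∑ i ∈ Finset.range (j+1), (-1:ℂ)^i * (j.choose i) * (F i - F (i+1)) := by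
  have hB : ∑ i ∈ Finset.range (j+1), (-1:ℂ)^i * (j.choose i) * (F i - F (i+1))
      = (∑ i ∈ Finset.range (j+1), (-1:ℂ)^i * (j.choose i) * F i)
        - ∑ i ∈ Finset.range (j+1), (-1:ℂ)^i * (j.choose i) * F (i+1) := by
    rw [← Finset.sum_sub_distrib]
    apply Finset.sum_congr rfl
    intro i _
    ring
  have hC : ∑ i ∈ Finset.range (j+1), (-1:ℂ)^i * (j.choose (i+1)) * F (i+1)
      = ∑ i ∈ Finset.range j, (-1:ℂ)^i * (j.choose (i+1)) * F (i+1) := by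
    rw [Finset.sum_range_succ, Nat.choose_succ_self]
    simp
  have hA : (∑ i ∈ Finset.range (j+1), (-1:ℂ)^i * (j.choose i) * F i)
        + ∑ i ∈ Finset.range (j+1), (-1:ℂ)^i * (j.choose (i+1)) * F (i+1) = F 0 := by
    rw [hC, Finset.sum_range_succ' (fun i => (-1:ℂ)^i * ((j.choose i : ℕ) : ℂ) * F i) j]
    have h5 : ∀ i, (-1:ℂ)^(i+1) * ((j.choose (i+1) : ℕ) : ℂ) * F (i+1)
        = -((-1:ℂ)^i * (j.choose (i+1)) * F (i+1)) := by
      intro i; ring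
    simp only [h5]
    rw [Finset.sum_neg_distrib]
    simp
  have hL : ∑ i ∈ Finset.range (j+2), (-1:ℂ)^i * ((j+1).choose i) * F i
      = F 0 - (∑ i ∈ Finset.range (j+1), (-1:ℂ)^i * (j.choose i) * F (i+1))
          - ∑ i ∈ Finset.range (j+1), (-1:ℂ)^i * (j.choose (i+1)) * F (i+1) := by
    rw [Finset.sum_range_succ' (fun i => (-1:ℂ)^i * (((j+1).choose i : ℕ) : ℂ) * F i) (j+1)]
    have h6 : ∀ i, (-1:ℂ)^(i+1) * (((j+1).choose (i+1) : ℕ) : ℂ) * F (i+1)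
        = -((-1:ℂ)^i * (j.choose i) * F (i+1)) - ((-1:ℂ)^i * (j.choose (i+1)) * F (i+1)) := by
      intro i
      have hP : (((j+1).choose (i+1) : ℕ) : ℂ) = (j.choose i : ℂ) + (j.choose (i+1) : ℂ) := by
        rw [Nat.choose_succ_succ]
        push_cast
        ring
      rw [hP]; ring
    simp only [h6]
    rw [Finset.sum_sub_distrib, Finset.sum_neg_distrib]
    simp
    ring
  rw [hB, hL]
  linear_combination -hA

lemma S_rec (j a x : ℕ) (ha : 1 ≤ a) (hjx : j + 1 ≤ x) :
    binomS (j+1) a x = binomS j (a-1) (x-1) := by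
  unfold binomS
  rw [show j+1+1 = j+2 from rfl, alt_helper j (fun i => (((x - i).choose a : ℕ) : ℂ))]
  apply Finset.sum_congr rfl
  intro i hi
  have hij : i ≤ j := Nat.lt_succ_iff.mp (Finset.mem_range.mp hi)
  have h4 : (x - i).choose a = (x-1-i).choose (a-1) + (x-1-i).choose a := by
    have h := Nat.choose_succ_succ (x-1-i) (a-1)
    rw [Nat.succ_eq_add_one, Nat.succ_eq_add_one] at h
    rw [show (x-1-i)+1 = x - i from by omega, show (a-1)+1 = a from by omega] at h
    exact h
  have h3 : x - (i+1) = x - 1 - i := by omega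
  rw [h3, h4]
  push_cast
  ring

lemma S_eq_zero {j a x : ℕ} (h1 : a < j) (h2 : j ≤ x) : binomS j a x = 0 := by
  induction a generalizing j x with
  | zero =>
    obtain ⟨j', rfl⟩ : ∃ j', j = j'+1 := ⟨j-1, by omega⟩
    have hz : binomS (j'+1) 0 x
        = ∑ i ∈ Finset.range (j'+2), (-1:ℂ)^i * ((j'+1).choose i) := by
      unfold binomS
      apply Finset.sum_congr rfl
      intro i _
      rw [Nat.choose_zero_right]
      push_cast
      ring
    rw [hz]
    have h := Int.alternating_sum_range_choose (n := j'+1)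
    rw [if_neg (by omega)] at h
    calc ∑ i ∈ Finset.range (j'+2), (-1:ℂ)^i * ((j'+1).choose i)
        = ((∑ i ∈ Finset.range (j'+2), (-1:ℤ)^i * ((j'+1).choose i) : ℤ) : ℂ) := by
          push_cast
          rfl
      _ = 0 := by rw [h]; simp
  | succ a ih =>
    obtain ⟨j', rfl⟩ : ∃ j', j = j'+1 := ⟨j-1, by omega⟩
    rw [S_rec j' (a+1) x (by omega) (by omega)]
    simp only [Nat.succ_sub_one]
    exact ih (by omega) (by omega)

lemma S_eq_choose {j a x : ℕ} (h1 : j ≤ a) (h2 : a ≤ x) :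
    binomS j a x = (((x-j).choose (a-j) : ℕ) : ℂ) := by
  induction j generalizing a x with
  | zero =>
    unfold binomS
    simp
  | succ j ih =>
    rw [S_rec j a x (by omega) (by omega), ih (by omega) (by omega)]
    congr 2 <;> omega

lemma vand (s D a N : ℕ) (haN : a < N) :
    ∑ u ∈ Finset.range (min N (s+1)),
        (if u ≤ a then s.choose u * (a+D).choose (a-u) else 0)
      = (s + (a+D)).choose a := by
  rw [Nat.add_choose_eq, Finset.Nat.sum_antidiagonal_eq_sum_range_succ_mk]
  set T := max (min N (s+1)) (a+1) with hT
  have h1 : ∑ u ∈ Finset.range (min N (s+1)),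
        (if u ≤ a then s.choose u * (a+D).choose (a-u) else 0)
      = ∑ u ∈ Finset.range T, (if u ≤ a then s.choose u * (a+D).choose (a-u) else 0) := by
    apply Finset.sum_subset
    · apply Finset.range_subset_range.2
      omega
    · intro u hu hnu
      rw [Finset.mem_range] at hu
      rw [Finset.mem_range, not_lt] at hnu
      by_cases hua : u ≤ a
      · rw [if_pos hua]
        have : s < u := by omega
        rw [Nat.choose_eq_zero_of_lt this, zero_mul]
      · rw [if_neg hua]
  have h2 : ∑ k ∈ Finset.range (a+1), s.choose k * (a+D).choose (a-k)
      = ∑ u ∈ Finset.range T, (if u ≤ a then s.choose u * (a+D).choose (a-u) else 0) := by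
    calc ∑ k ∈ Finset.range (a+1), s.choose k * (a+D).choose (a-k)
        = ∑ u ∈ Finset.range (a+1),
            (if u ≤ a then s.choose u * (a+D).choose (a-u) else 0) := by
          apply Finset.sum_congr rfl
          intro u hu
          rw [Finset.mem_range] at hu
          rw [if_pos (by omega : u ≤ a)]
      _ = ∑ u ∈ Finset.range T, (if u ≤ a then s.choose u * (a+D).choose (a-u) else 0) := by
          apply Finset.sum_subset (Finset.range_subset_range.2 (show a+1 ≤ T by omega))
          intro u hu hnu
          rw [Finset.mem_range, not_lt] at hnu
          rw [if_neg (by omega)]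
  rw [h1, h2]


/-! ### Lp elements and inner products -/

/-- the diagonal moment value -/
def IV (m : ℝ) (p : ℕ) : ℂ := (((p.factorial : ℝ) / m ^ (p + 1) : ℝ) : ℂ)

lemma IV_eq (m : ℝ) (p : ℕ) : IV m p = (p.factorial : ℂ) / (m:ℂ)^(p+1) := by
  unfold IV
  push_cast
  rfl

/-- the monomial `z̄^a z^b` as an element of `L²(μ_m)` -/
def eL (m : ℝ) (hm : 0 < m) (a b : ℕ) : Lp2 m := (memLp_mono m hm a b).toLp _

lemma inner_eL (m : ℝ) (hm : 0 < m) (a b j k : ℕ) :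
    (inner ℂ (eL m hm a b) (eL m hm j k) : ℂ)
      = if b + j = a + k then IV m (b + j) else 0 := by
  unfold eL
  rw [L2.inner_def]
  have h1 := (memLp_mono m hm a b).coeFn_toLp
  have h2 := (memLp_mono m hm j k).coeFn_toLp
  have key : ∫ z, (inner ℂ (((memLp_mono m hm a b).toLp _ : ℂ → ℂ) z)
        (((memLp_mono m hm j k).toLp _ : ℂ → ℂ) z) : ℂ) ∂gaussMeasure m
      = ∫ z, (starRingEnd ℂ) z ^ (b + j) * z ^ (a + k) ∂gaussMeasure m := by
    apply integral_congr_ae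
    filter_upwards [h1, h2] with z hz1 hz2
    rw [hz1, hz2, RCLike.inner_apply]
    rw [map_mul, map_pow, map_pow, Complex.conj_conj]
    rw [pow_add, pow_add]
    ring
  rw [key]
  by_cases hd : b + j = a + k
  · rw [if_pos hd, ← hd, J_diag m hm (b+j)]
    rfl
  · rw [if_neg hd, J_offdiag m hd]

def hermCoef (m : ℝ) (i j k : ℕ) : ℂ :=
  ((-1:ℂ)^i * (i.factorial : ℂ) * (j.choose i) * (k.choose i)) / (m:ℂ)^i

/-- the complex Hermite polynomial `H_{j,k}` as an element of `L²(μ_m)` -/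
def hermL (m : ℝ) (hm : 0 < m) (j k : ℕ) : Lp2 m :=
  ∑ i ∈ Finset.range (j+1), hermCoef m i j k • eL m hm (j-i) (k-i)

lemma fact_id (i a k : ℕ) (hik : i ≤ k) :
    i.factorial * (k.choose i) * (a+k-i).factorial
      = k.factorial * (a.factorial * ((a+k-i).choose a)) := by
  have h1 := Nat.choose_mul_factorial_mul_factorial hik
  have h2 := Nat.choose_mul_factorial_mul_factorial (show a ≤ a+k-i by omega)
  rw [show a+k-i-a = k-i from by omega] at h2
  rw [← h2, ← h1]
  ring

lemma inner_eL_hermL (m : ℝ) (hm : 0 < m) (a b j k : ℕ) (hjk : j ≤ k) :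
    (inner ℂ (eL m hm a b) (hermL m hm j k) : ℂ)
      = if b + j = a + k then
          ((k.factorial : ℂ) * (a.factorial : ℂ) / (m:ℂ)^(a+k+1)) * binomS j a (a+k)
        else 0 := by
  have hm0 : (m:ℂ) ≠ 0 := by
    simp only [ne_eq, Complex.ofReal_eq_zero]
    exact hm.ne'
  rw [hermL, inner_sum]
  simp_rw [inner_smul_right, inner_eL m hm]
  by_cases hd : b + j = a + k
  · rw [if_pos hd, binomS, Finset.mul_sum]
    apply Finset.sum_congr rfl
    intro i hi
    have hij : i ≤ j := Nat.lt_succ_iff.mp (Finset.mem_range.mp hi)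
    have hik : i ≤ k := le_trans hij hjk
    have hcond : b + (j - i) = a + (k - i) := by omega
    rw [if_pos hcond]
    have hval : b + (j - i) = a + k - i := by omega
    rw [hval, IV_eq]
    have hxi : a + k - i = a + (k - i) := by omega
    have hfact : ((i.factorial : ℂ) * (k.choose i) * ((a+k-i).factorial))
        = (k.factorial : ℂ) * ((a.factorial : ℂ) * ((a+k-i).choose a)) := by
      exact_mod_cast congrArg (Nat.cast (R := ℂ)) (fact_id i a k hik)
    have hpow : (m:ℂ)^i * (m:ℂ)^(a+k-i+1) = (m:ℂ)^(a+k+1) := by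
      rw [← pow_add]
      congr 1
      omega
    rw [hermCoef]
    rw [div_mul_div_comm, hpow]
    rw [show ((k.factorial : ℂ) * (a.factorial : ℂ) / (m:ℂ)^(a+k+1)) *
        ((-1:ℂ)^i * (j.choose i) * ((a+k-i).choose a))
      = ((k.factorial : ℂ) * ((a.factorial : ℂ) * ((a+k-i).choose a)) * ((-1:ℂ)^i * (j.choose i)))
          / (m:ℂ)^(a+k+1) from by ring]
    rw [← hfact]
    ring
  · rw [if_neg hd]
    apply Finset.sum_eq_zero
    intro i hi
    have hij : i ≤ j := Nat.lt_succ_iff.mp (Finset.mem_range.mp hi)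
    by_cases hik : i ≤ k
    · rw [if_neg (by omega : ¬ (b + (j - i) = a + (k - i)))]
      rw [mul_zero]
    · rw [hermCoef, Nat.choose_eq_zero_of_lt (by omega : k < i)]
      push_cast
      simp


/-! ### The projection -/

lemma fact2 (s n u : ℕ) (hu : u ≤ s) (hsn : s ≤ n) :
    (s-u).factorial * (s.choose (s-u)) * (n.choose (s-u)) * ((n-s)+u).factorial
      = n.factorial * (s.choose u) := by
  have h1 := Nat.choose_mul_factorial_mul_factorial (show s-u ≤ n by omega)
  rw [show n-(s-u) = (n-s)+u from by omega] at h1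
  rw [Nat.choose_symm hu, ← h1]
  ring

/-- coefficient of the projection expansion -/
def cg (m : ℝ) (s n u : ℕ) : ℂ :=
  (((s-u).factorial : ℂ) * (s.choose (s-u)) * (n.choose (s-u))) / (m:ℂ)^(s-u)

/-- the projection of `z̄ˢzⁿ` onto the polyanalytic Fock space -/
def gElem (m : ℝ) (hm : 0 < m) (N s n : ℕ) : Lp2 m :=
  ∑ u ∈ Finset.range (min N (s+1)), cg m s n u • hermL m hm u ((n-s)+u)

lemma hermL_mem (m : ℝ) (hm : 0 < m) (N j k : ℕ) (hj : j < N) :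
    hermL m hm j k ∈ polyFock m N := by
  apply Submodule.le_topologicalClosure
  apply Submodule.sum_mem
  intro i _
  apply Submodule.smul_mem
  apply Submodule.subset_span
  exact ⟨j - i, k - i, by omega, (memLp_mono m hm (j-i) (k-i)).coeFn_toLp⟩

lemma gElem_mem (m : ℝ) (hm : 0 < m) (N s n : ℕ) : gElem m hm N s n ∈ polyFock m N := by
  apply Submodule.sum_mem
  intro u hu
  rw [Finset.mem_range] at hu
  exact Submodule.smul_mem _ _ (hermL_mem m hm N u _ (by omega))

lemma claim0 (m : ℝ) (hm : 0 < m) (N s n : ℕ) (hsn : s ≤ n) (a b : ℕ) (ha : a < N) :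
    (inner ℂ (eL m hm a b) (eL m hm s n - gElem m hm N s n) : ℂ) = 0 := by
  have hm0 : (m:ℂ) ≠ 0 := by
    simp only [ne_eq, Complex.ofReal_eq_zero]
    exact hm.ne'
  rw [inner_sub_right, gElem, inner_sum]
  simp_rw [inner_smul_right]
  rw [inner_eL m hm]
  by_cases hbs : b + s = a + n
  · rw [if_pos hbs]
    have hterm : ∀ u ∈ Finset.range (min N (s+1)),
        cg m s n u * (inner ℂ (eL m hm a b) (hermL m hm u ((n-s)+u)) : ℂ)
          = ((n.factorial : ℂ) * (a.factorial : ℂ) / (m:ℂ)^(a+n+1)) *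
              (if u ≤ a then ((s.choose u : ℂ) * (((a+(n-s)).choose (a-u) : ℕ) : ℂ)) else 0) := by
      intro u hu
      rw [Finset.mem_range] at hu
      have hus : u ≤ s := by omega
      rw [inner_eL_hermL m hm a b u ((n-s)+u) (Nat.le_add_left u (n-s))]
      rw [if_pos (by omega : b + u = a + ((n-s)+u))]
      by_cases hua : u ≤ a
      · rw [if_pos hua]
        have hS : binomS u a (a + ((n-s)+u)) = (((a+(n-s)).choose (a-u) : ℕ) : ℂ) := by
          rw [S_eq_choose hua (by omega)]
          congr 2
          omega
        rw [hS, cg]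
        have hfact : (((s-u).factorial * (s.choose (s-u)) * (n.choose (s-u)) *
              ((n-s)+u).factorial : ℕ) : ℂ) = ((n.factorial * (s.choose u) : ℕ) : ℂ) :=
          congrArg (Nat.cast (R := ℂ)) (fact2 s n u hus hsn)
        push_cast at hfact
        have hpow : (m:ℂ)^(s-u) * (m:ℂ)^(a+((n-s)+u)+1) = (m:ℂ)^(a+n+1) := by
          rw [← pow_add]
          congr 1
          omega
        rw [show ((((n-s)+u).factorial : ℂ) * (a.factorial : ℂ) / (m:ℂ)^(a+((n-s)+u)+1)) *
            (((a+(n-s)).choose (a-u) : ℕ) : ℂ) = (((n-s)+u).factorial : ℂ) * (a.factorial : ℂ) *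
            (((a+(n-s)).choose (a-u) : ℕ) : ℂ) / (m:ℂ)^(a+((n-s)+u)+1) from by ring]
        rw [div_mul_div_comm, hpow]
        rw [show ((n.factorial : ℂ) * (a.factorial : ℂ) / (m:ℂ)^(a+n+1)) *
            ((s.choose u : ℂ) * (((a+(n-s)).choose (a-u) : ℕ) : ℂ))
          = ((n.factorial : ℂ) * (s.choose u : ℂ)) * ((a.factorial : ℂ) *
              (((a+(n-s)).choose (a-u) : ℕ) : ℂ)) / (m:ℂ)^(a+n+1) from by ring]
        rw [← hfact]
        ring
      · rw [if_neg hua]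
        rw [S_eq_zero (by omega : a < u) (by omega : u ≤ a + ((n-s)+u))]
        ring
    rw [Finset.sum_congr rfl hterm, ← Finset.mul_sum]
    have hv : (∑ u ∈ Finset.range (min N (s+1)),
          (if u ≤ a then ((s.choose u : ℂ) * (((a+(n-s)).choose (a-u) : ℕ) : ℂ)) else 0))
        = (((s+(a+(n-s))).choose a : ℕ) : ℂ) := by
      rw [← vand s (n-s) a N ha]
      push_cast [apply_ite (Nat.cast (R := ℂ))]
      rfl
    rw [hv, IV_eq]
    have hfin : ((s+(a+(n-s))).choose a : ℕ) = (a+n).choose a := by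
      congr 1
      omega
    rw [hfin]
    have hfact3 : ((a+n).factorial : ℂ) = ((n.factorial : ℂ) * (a.factorial : ℂ)) *
        (((a+n).choose a : ℕ) : ℂ) := by
      have h1 := Nat.choose_mul_factorial_mul_factorial (show a ≤ a+n by omega)
      rw [show a+n-a = n from by omega] at h1
      rw [show ((a+n).factorial : ℂ) = (((a+n).choose a * a.factorial * n.factorial : ℕ) : ℂ)
        from by rw [h1]]
      push_cast
      ring
    rw [show b + s = a + n from hbs, hfact3]
    field_simp
    ring
  · rw [if_neg hbs]
    have hterm : ∀ u ∈ Finset.range (min N (s+1)),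
        cg m s n u * (inner ℂ (eL m hm a b) (hermL m hm u ((n-s)+u)) : ℂ) = 0 := by
      intro u hu
      rw [Finset.mem_range] at hu
      rw [inner_eL_hermL m hm a b u ((n-s)+u) (Nat.le_add_left u (n-s))]
      rw [if_neg (by omega : ¬ (b + u = a + ((n-s)+u)))]
      ring
    rw [Finset.sum_congr rfl hterm]
    simp

lemma sub_mem_orth (m : ℝ) (hm : 0 < m) (N s n : ℕ) (hsn : s ≤ n) :
    eL m hm s n - gElem m hm N s n ∈ (polyFock m N)ᗮ := by
  rw [Submodule.mem_orthogonal]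
  intro w hw
  set x := eL m hm s n - gElem m hm N s n with hx
  have hcont : Continuous fun v : Lp2 m => (inner ℂ v x : ℂ) :=
    continuous_id.inner continuous_const
  have hclosed : IsClosed {v : Lp2 m | (inner ℂ v x : ℂ) = 0} :=
    isClosed_eq hcont continuous_const
  have hspan : ∀ v ∈ Submodule.span ℂ {f : Lp2 m | ∃ j k : ℕ, j < N ∧
      (f : ℂ → ℂ) =ᵐ[gaussMeasure m] fun z => (starRingEnd ℂ) z ^ j * z ^ k},
      (inner ℂ v x : ℂ) = 0 := by
    intro v hv
    induction hv using Submodule.span_induction with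
    | mem v hmem =>
      obtain ⟨j, k, hjN, hjk⟩ := hmem
      have hveq : v = eL m hm j k :=
        Lp.ext (hjk.trans (memLp_mono m hm j k).coeFn_toLp.symm)
      rw [hveq]
      exact claim0 m hm N s n hsn j k hjN
    | zero => rw [inner_zero_left]
    | add y z hy hz hy2 hz2 => rw [inner_add_left, hy2, hz2, add_zero]
    | smul c y hy hy2 => rw [inner_smul_left, hy2, mul_zero]
  have hwcl : w ∈ closure (Submodule.span ℂ {f : Lp2 m | ∃ j k : ℕ, j < N ∧
      (f : ℂ → ℂ) =ᵐ[gaussMeasure m] fun z => (starRingEnd ℂ) z ^ j * z ^ k} :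
        Set (Lp2 m)) := by
    rw [← Submodule.topologicalClosure_coe]
    exact hw
  exact closure_minimal hspan hclosed hwcl


lemma hinner (m : ℝ) (hm : 0 < m) (N s n : ℕ) (hsn : s ≤ n) :
    (inner ℂ (eL m hm s n) (gElem m hm N s n) : ℂ)
      = ((n.factorial : ℂ) * (s.factorial : ℂ) / (m:ℂ)^(s+n+1)) *
          ∑ u ∈ Finset.range (min N (s+1)), ((s.choose u : ℂ) * ((n.choose (s-u) : ℕ) : ℂ)) := by
  have hm0 : (m:ℂ) ≠ 0 := by
    simp only [ne_eq, Complex.ofReal_eq_zero]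
    exact hm.ne'
  rw [gElem, inner_sum]
  simp_rw [inner_smul_right]
  rw [Finset.mul_sum]
  apply Finset.sum_congr rfl
  intro u hu
  rw [Finset.mem_range] at hu
  have hus : u ≤ s := by omega
  rw [inner_eL_hermL m hm s n u ((n-s)+u) (Nat.le_add_left u (n-s))]
  rw [if_pos (by omega : n + u = s + ((n-s)+u))]
  have hS : binomS u s (s + ((n-s)+u)) = ((n.choose (s-u) : ℕ) : ℂ) := by
    rw [S_eq_choose hus (by omega)]
    congr 2
    omega
  rw [hS, cg]
  have hfact : (((s-u).factorial * (s.choose (s-u)) * (n.choose (s-u)) *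
        ((n-s)+u).factorial : ℕ) : ℂ) = ((n.factorial * (s.choose u) : ℕ) : ℂ) :=
    congrArg (Nat.cast (R := ℂ)) (fact2 s n u hus hsn)
  push_cast at hfact
  have hpow : (m:ℂ)^(s-u) * (m:ℂ)^(s+((n-s)+u)+1) = (m:ℂ)^(s+n+1) := by
    rw [← pow_add]
    congr 1
    omega
  rw [show ((((n-s)+u).factorial : ℂ) * (s.factorial : ℂ) / (m:ℂ)^(s+((n-s)+u)+1)) *
      ((n.choose (s-u) : ℕ) : ℂ) = (((n-s)+u).factorial : ℂ) * (s.factorial : ℂ) *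
      ((n.choose (s-u) : ℕ) : ℂ) / (m:ℂ)^(s+((n-s)+u)+1) from by ring]
  rw [div_mul_div_comm, hpow]
  rw [show ((n.factorial : ℂ) * (s.factorial : ℂ) / (m:ℂ)^(s+n+1)) *
      ((s.choose u : ℂ) * ((n.choose (s-u) : ℕ) : ℂ))
    = ((n.factorial : ℂ) * (s.choose u : ℂ)) * ((s.factorial : ℂ) *
        ((n.choose (s-u) : ℕ) : ℂ)) / (m:ℂ)^(s+n+1) from by ring]
  rw [← hfact]
  ring

end ProofAux

/-- For `n ≥ s`,
`(m^{n+1}/n!)⟨z̄^s z^n, P_{F^{N,m}}(z̄^s z^n)⟩ = (s!/m^s) Σ_{r=0}^{N-1} binom(n,s-r) binom(s,r)`,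
out-of-range binomial coefficients being `0`. -/
theorem inner_proj_monomial (m : ℝ) (hm : 0 < m) (N : ℕ) (hN : 1 ≤ N) (s n : ℕ) (hsn : s ≤ n)
    (h : MemLp (fun z : ℂ => (starRingEnd ℂ) z ^ s * z ^ n) 2 (gaussMeasure m)) :
    ((m ^ (n + 1) / (Nat.factorial n : ℝ) : ℝ) : ℂ) *
        (inner ℂ (h.toLp _) (((polyFock m N).orthogonalProjectionOnto (h.toLp _) : polyFock m N) :
          Lp2 m) : ℂ) =
      (((Nat.factorial s : ℝ) / m ^ s : ℝ) : ℂ) *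
        ∑ r ∈ Finset.range N, ((n.choose (s - r) : ℂ) * (s.choose r : ℂ)) := by
  classical
  have hm0 : (m:ℂ) ≠ 0 := by
    simp only [ne_eq, Complex.ofReal_eq_zero]
    exact hm.ne'
  have hfeq : h.toLp _ = ProofAux.eL m hm s n :=
    Lp.ext (h.coeFn_toLp.trans (ProofAux.memLp_mono m hm s n).coeFn_toLp.symm)
  rw [hfeq]
  have hproj : (((polyFock m N).orthogonalProjectionOnto (ProofAux.eL m hm s n) : polyFock m N) :
      Lp2 m) = ProofAux.gElem m hm N s n :=
    Submodule.eq_starProjection_of_mem_orthogonal (ProofAux.gElem_mem m hm N s n)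
      (ProofAux.sub_mem_orth m hm N s n hsn)
  rw [hproj, ProofAux.hinner m hm N s n hsn]
  -- extend sum from `min N (s+1)` to `N`
  have hsum : ∑ u ∈ Finset.range (min N (s+1)), ((s.choose u : ℂ) * ((n.choose (s-u) : ℕ) : ℂ))
      = ∑ r ∈ Finset.range N, ((n.choose (s - r) : ℂ) * (s.choose r : ℂ)) := by
    rw [Finset.sum_subset (Finset.range_subset_range.2 (min_le_left N (s+1)))]
    · apply Finset.sum_congr rfl
      intro r _
      ring
    · intro u hu hnu
      rw [Finset.mem_range] at hu
      rw [Finset.mem_range, not_lt] at hnu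
      rw [Nat.choose_eq_zero_of_lt (show s < u by omega)]
      push_cast
      ring
  rw [hsum]
  rw [show ((m ^ (n + 1) / (n.factorial : ℝ) : ℝ) : ℂ)
    = (m:ℂ)^(n+1) / (n.factorial : ℂ) from by push_cast; rfl]
  rw [show (((s.factorial : ℝ) / m ^ s : ℝ) : ℂ)
    = (s.factorial : ℂ) / (m:ℂ)^s from by push_cast; rfl]
  have hpow : (m:ℂ)^(s+n+1) = (m:ℂ)^s * (m:ℂ)^(n+1) := by
    rw [← pow_add, Nat.add_assoc]
  have hnf : (n.factorial : ℂ) ≠ 0 := by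
    exact_mod_cast Nat.cast_ne_zero.2 n.factorial_ne_zero
  rw [hpow]
  field_simp
end
end

section
/- Let m > 0 and N ≥ 1. Then for every n ∈ ℕ with n ≥ N, ‖H̃^N_{z̄^N} e_n‖²_{L²(μ_m)} = N!/m^N, where e_n(z) = (m^{(n+1)/2}/√(n!)) z^n. Consequently H̃^N_{z̄^N} extends to a bounded operator from 𝓕_m to L²(μ_m). -/
open MeasureTheory Complex Polynomial Filter

noncomputable section

/-! ### Auxiliary material -/

section Aux

open Finset Set
open scoped NNReal ENNReal Real

local notation "⟪" x ", " y "⟫" => @inner ℂ _ _ x y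

/-! #### Combinatorial lemmas -/

lemma lemA (j : ℕ) : ∀ (N M : ℕ), N ≤ M →
    ∑ l ∈ range (N+1), (-1:ℤ)^l * (N.choose l) * ((M-l).choose j) =
      if N ≤ j then (((M-N).choose (j-N) : ℤ)) else 0 := by
  intro N
  induction N with
  | zero => intro M _; simp
  | succ N ih =>
    intro M hM
    have hM1 : N ≤ M - 1 := by omega
    have key : ∑ l ∈ range (N+2), (-1:ℤ)^l * ((N+1).choose l) * ((M-l).choose j)
        = (∑ l ∈ range (N+1), (-1:ℤ)^l * (N.choose l) * ((M-l).choose j))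
          - ∑ l ∈ range (N+1), (-1:ℤ)^l * (N.choose l) * ((M-1-l).choose j) := by
      have hsplit : ∀ l, ((N+1).choose (l+1) : ℤ) = (N.choose l : ℤ) + (N.choose (l+1) : ℤ) := by
        intro l; exact_mod_cast congrArg (Nat.cast (R := ℤ)) (Nat.choose_succ_succ N l)
      rw [Finset.sum_range_succ' _ (N+1)]
      rw [Finset.sum_range_succ' (fun l => (-1:ℤ)^l * (N.choose l) * ((M-l).choose j)) N]
      have h2 : ∑ l ∈ range (N+1), (-1:ℤ)^(l+1) * ((N+1).choose (l+1)) * ((M-(l+1)).choose j)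
          = -(∑ l ∈ range (N+1), (-1:ℤ)^l * (N.choose l) * ((M-1-l).choose j))
            - ∑ l ∈ range (N+1), (-1:ℤ)^l * (N.choose (l+1)) * ((M-1-l).choose j) := by
        rw [← Finset.sum_neg_distrib, ← Finset.sum_sub_distrib]
        apply Finset.sum_congr rfl
        intro l _
        have : M - (l+1) = M - 1 - l := by omega
        rw [this, hsplit l]
        ring
      rw [h2]
      have h3 : ∑ l ∈ range (N+1), (-1:ℤ)^l * (N.choose (l+1)) * ((M-1-l).choose j)
          = ∑ l ∈ range N, (-1:ℤ)^l * (N.choose (l+1)) * ((M-1-l).choose j) := by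
        rw [Finset.sum_range_succ]
        simp [Nat.choose_succ_self]
      have h4 : ∑ l ∈ range N, (-1:ℤ)^l * (N.choose (l+1)) * ((M-1-l).choose j)
          = -∑ l ∈ range N, (-1:ℤ)^(l+1) * (N.choose (l+1)) * ((M-(l+1)).choose j) := by
        rw [← Finset.sum_neg_distrib]
        apply Finset.sum_congr rfl
        intro l _
        have : M - (l+1) = M - 1 - l := by omega
        rw [this]; ring
      rw [h3, h4]
      simp [Nat.choose_zero_right]
      ring
    rw [key, ih M (by omega), ih (M-1) hM1]
    rcases lt_trichotomy j N with hj | hj | hj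
    · simp [Nat.not_le.mpr (by omega : j < N), Nat.not_le.mpr (by omega : j < N+1)]
    · subst hj
      simp [Nat.not_le.mpr (by omega : j < j+1), Nat.sub_self]
    · have hNj : N ≤ j := by omega
      have hN1j : N + 1 ≤ j := by omega
      simp only [if_pos hNj, if_pos hN1j]
      have e1 : M - N = (M - (N+1)) + 1 := by omega
      have e2 : j - N = (j - (N+1)) + 1 := by omega
      have e3 : M - 1 - N = M - (N+1) := by omega
      rw [e1, e2, e3, Nat.choose_succ_succ]
      push_cast
      ring

lemma lemT {n l j : ℕ} (hl : l ≤ n) :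
    l.factorial * n.choose l * (n + j - l).factorial
      = n.factorial * j.factorial * ((n + j - l).choose j) := by
  have h1 : n.choose l * l.factorial * (n - l).factorial = n.factorial :=
    Nat.choose_mul_factorial_mul_factorial hl
  have h2 : (n + j - l).choose j * j.factorial * ((n + j - l) - j).factorial
      = (n + j - l).factorial := Nat.choose_mul_factorial_mul_factorial (by omega)
  have h3 : (n + j - l) - j = n - l := by omega
  rw [h3] at h2
  apply Nat.eq_of_mul_eq_mul_right (Nat.factorial_pos (n - l))
  calc l.factorial * n.choose l * (n + j - l).factorial * (n - l).factorial
      = (n.choose l * l.factorial * (n - l).factorial) * (n + j - l).factorial := by ring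
    _ = n.factorial * (n + j - l).factorial := by rw [h1]
    _ = n.factorial * j.factorial * ((n + j - l).choose j) * (n-l).factorial := by
        rw [← h2]; ring

lemma lemB {N n j : ℕ} (hN : 1 ≤ N) (hj : j ≤ N) (hnj : N ≤ n + j) :
    ∑ l ∈ range (min N n + 1),
        (-1:ℤ)^l * (l.factorial * (N.choose l) * (n.choose l)) * ((n + j - l).factorial)
      = if j = N then ((n.factorial * N.factorial : ℕ) : ℤ) else 0 := by
  have hj1 : n < N → 1 ≤ j := fun h => by omega
  have step1 : ∑ l ∈ range (min N n + 1),
        (-1:ℤ)^l * (l.factorial * (N.choose l) * (n.choose l)) * ((n + j - l).factorial)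
      = ∑ l ∈ range (N + 1),
        (-1:ℤ)^l * (l.factorial * (N.choose l) * (n.choose l)) * ((n + j - l).factorial) := by
    rcases le_or_gt N n with h | h
    · rw [min_eq_left h]
    · rw [min_eq_right h.le]
      apply Finset.sum_subset (Finset.range_subset_range.mpr (by omega))
      intro x hx1 hx2
      simp only [Finset.mem_range] at hx1 hx2
      have : n < x := by omega
      simp [Nat.choose_eq_zero_of_lt this]
  have step2 : ∑ l ∈ range (N + 1),
        (-1:ℤ)^l * (l.factorial * (N.choose l) * (n.choose l)) * ((n + j - l).factorial)
      = (n.factorial * j.factorial : ℕ) *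
          ∑ l ∈ range (N+1), (-1:ℤ)^l * (N.choose l) * (((n+j)-l).choose j) := by
    rw [Finset.mul_sum]
    apply Finset.sum_congr rfl
    intro l hl
    simp only [Finset.mem_range] at hl
    rcases le_or_gt l n with h | h
    · have := lemT (n := n) (l := l) (j := j) h
      have e : ((l.factorial :ℤ) * (n.choose l) * ((n + j - l).factorial))
          = (n.factorial) * (j.factorial) * ((n + j - l).choose j) := by
        exact_mod_cast congrArg (Nat.cast (R := ℤ)) this
      push_cast
      linear_combination ((-1:ℤ)^l * (N.choose l)) * e
    · have hj' : 1 ≤ j := hj1 (by omega)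
      have hz1 : (n.choose l) = 0 := Nat.choose_eq_zero_of_lt h
      have hz2 : ((n + j - l).choose j) = 0 := Nat.choose_eq_zero_of_lt (by omega)
      simp [hz1, hz2]
  rw [step1, step2, lemA j N (n+j) hnj]
  rcases eq_or_lt_of_le hj with h | h
  · subst h
    simp [Nat.sub_self]
  · rw [if_neg (by omega), if_neg (by omega), mul_zero]

/-! #### Integral computations -/

variable {m : ℝ}

lemma gaussDensity_cont :
    Continuous fun z : ℂ => (1 / Real.pi) * Real.exp (-m * ‖z‖ ^ 2) := by
  exact continuous_const.mul (Real.continuous_exp.comp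
    (continuous_const.mul (continuous_norm.pow 2)))

lemma gaussDensity_nonneg (z : ℂ) : 0 ≤ (1 / Real.pi) * Real.exp (-m * ‖z‖ ^ 2) := by
  positivity

lemma integral_gaussMeasure (g : ℂ → ℂ) :
    ∫ z, g z ∂(gaussMeasure m)
      = ∫ z, ((1 / Real.pi) * Real.exp (-m * ‖z‖ ^ 2)) • g z := by
  rw [gaussMeasure]
  have : (fun z : ℂ => ENNReal.ofReal ((1 / Real.pi) * Real.exp (-m * ‖z‖ ^ 2)))
      = fun z : ℂ => (((1 / Real.pi) * Real.exp (-m * ‖z‖ ^ 2)).toNNReal : ℝ≥0∞) := by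
    rfl
  rw [this, integral_withDensity_eq_integral_smul (by
    exact (continuous_real_toNNReal.comp gaussDensity_cont).measurable)]
  congr 1
  ext z
  rw [NNReal.smul_def, Real.coe_toNNReal _ (gaussDensity_nonneg z)]

lemma radial_integral (hm : 0 < m) (k : ℕ) :
    ∫ r in Set.Ioi (0:ℝ), r ^ (k+1) * Real.exp (-m * r^2)
      = m ^ (-((k:ℝ)+1+1) / 2) * (1 / 2) * Real.Gamma (((k:ℝ)+1+1)/2) := by
  have h := _root_.integral_rpow_mul_exp_neg_mul_rpow (p := 2) (q := ((k:ℝ)+1)) (b := m)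
    (by norm_num) (by linarith [Nat.cast_nonneg (α := ℝ) k]) hm
  have e : ∀ r ∈ Set.Ioi (0:ℝ), r ^ ((k:ℝ)+1) * Real.exp (-m * r ^ (2:ℝ))
      = r ^ (k+1) * Real.exp (-m * r^2) := by
    intro r hr
    rw [Set.mem_Ioi] at hr
    rw [show ((k:ℝ)+1) = ((k+1 : ℕ):ℝ) by push_cast; ring, Real.rpow_natCast,
      show (2:ℝ) = ((2:ℕ):ℝ) by norm_num, Real.rpow_natCast]
  rw [← setIntegral_congr_fun measurableSet_Ioi e, h]

lemma angular_integral (a b : ℕ) :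
    ∫ θ in Ioo (-Real.pi) Real.pi, Complex.exp (((a:ℂ) - b) * (θ * Complex.I))
      = if a = b then ((2 * Real.pi : ℝ) : ℂ) else 0 := by
  rw [← integral_Ioc_eq_integral_Ioo,
    ← intervalIntegral.integral_of_le (by linarith [Real.pi_pos] : -Real.pi ≤ Real.pi)]
  rcases eq_or_ne a b with h | h
  · subst h
    simp only [sub_self, zero_mul, Complex.exp_zero]
    rw [if_pos trivial, intervalIntegral.integral_const, Complex.real_smul]
    push_cast
    ring
  · rw [if_neg h]
    have hc : ((a:ℂ) - b) * Complex.I ≠ 0 := by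
      simp only [ne_eq, mul_eq_zero, Complex.I_ne_zero, or_false, sub_eq_zero]
      exact_mod_cast fun hh => h (by exact_mod_cast hh)
    have e : ∀ θ : ℝ, ((a:ℂ) - b) * (θ * Complex.I) = (((a:ℂ) - b) * Complex.I) * θ := by
      intro θ; ring
    simp_rw [e]
    rw [integral_exp_mul_complex hc]
    have key : Complex.exp ((((a:ℂ)-b) * Complex.I) * Real.pi)
        = Complex.exp ((((a:ℂ)-b) * Complex.I) * (-Real.pi)) := by
      rcases le_or_gt b a with hab | hab
      · have : (((a:ℂ)-b) * Complex.I) * Real.pi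
            = (((a:ℂ)-b) * Complex.I) * (-Real.pi)
              + ((a - b : ℤ) : ℂ) * (2 * Real.pi * Complex.I) := by
          push_cast; ring
        rw [this, Complex.exp_add, Complex.exp_int_mul_two_pi_mul_I, mul_one]
      · have : (((a:ℂ)-b) * Complex.I) * (-Real.pi)
            = (((a:ℂ)-b) * Complex.I) * Real.pi
              + ((b - a : ℤ) : ℂ) * (2 * Real.pi * Complex.I) := by
          push_cast; ring
        rw [this, Complex.exp_add, Complex.exp_int_mul_two_pi_mul_I, mul_one]
    rw [key, Complex.ofReal_neg, sub_self, zero_div]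

lemma integral_monomial (hm : 0 < m) (a b : ℕ) :
    ∫ z, z ^ a * (starRingEnd ℂ) z ^ b ∂(gaussMeasure m)
      = if a = b then ((a.factorial : ℂ) / (m:ℂ) ^ (a+1)) else 0 := by
  rw [integral_gaussMeasure]
  have e1 : ∀ z : ℂ,
      ((1 / Real.pi) * Real.exp (-m * ‖z‖ ^ 2)) • (z ^ a * (starRingEnd ℂ) z ^ b)
      = (1 / Real.pi : ℝ) •
          (Real.exp (-m * ‖z‖ ^ 2) • (z ^ a * (starRingEnd ℂ) z ^ b)) := by
    intro z; rw [smul_smul]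
  simp_rw [e1]
  rw [integral_smul]
  set F : ℂ → ℂ := fun z => Real.exp (-m * ‖z‖ ^ 2) • (z ^ a * (starRingEnd ℂ) z ^ b)
    with hF
  have hpolar : (∫ p in polarCoord.target, p.1 • F (Complex.polarCoord.symm p)) = ∫ z, F z :=
    Complex.integral_comp_polarCoord_symm F
  rw [← hpolar]
  have e2 : ∀ p ∈ polarCoord.target,
      p.1 • F (Complex.polarCoord.symm p)
        = (((p.1 ^ (a+b+1) * Real.exp (-m * p.1^2) : ℝ)) : ℂ)
            * Complex.exp (((a:ℂ) - b) * (p.2 * Complex.I)) := by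
    intro p hp
    rw [polarCoord_target] at hp
    obtain ⟨hr, hθ⟩ := hp
    rw [Set.mem_Ioi] at hr
    have hz : Complex.polarCoord.symm p = (p.1 : ℂ) * Complex.exp (p.2 * Complex.I) := by
      rw [Complex.polarCoord_symm_apply, Complex.exp_mul_I]
      push_cast
      ring
    have habs : ‖Complex.polarCoord.symm p‖ = p.1 := by
      rw [Complex.norm_polarCoord_symm, abs_of_pos hr]
    have hconj : (starRingEnd ℂ) (Complex.polarCoord.symm p)
        = (p.1 : ℂ) * Complex.exp (-((p.2:ℂ) * Complex.I)) := by
      rw [hz, map_mul, ← Complex.exp_conj]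
      congr 1
      · exact Complex.conj_ofReal p.1
      · congr 1
        simp [Complex.ext_iff]
    have hexp : Complex.exp ((a:ℂ) * ((p.2:ℂ) * Complex.I))
        * Complex.exp ((b:ℂ) * -((p.2:ℂ) * Complex.I))
        = Complex.exp (((a:ℂ) - b) * ((p.2:ℂ) * Complex.I)) := by
      rw [← Complex.exp_add]; congr 1; ring
    calc p.1 • F (Complex.polarCoord.symm p)
        = (p.1 : ℂ) * ((Real.exp (-m * p.1^2) : ℝ) : ℂ)
            * (((p.1:ℂ))^a * Complex.exp ((a:ℂ) * ((p.2:ℂ) * Complex.I))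
              * (((p.1:ℂ))^b * Complex.exp ((b:ℂ) * -((p.2:ℂ) * Complex.I)))) := by
          simp only [hF]
          rw [habs, hconj, hz, mul_pow, mul_pow, ← Complex.exp_nat_mul, ← Complex.exp_nat_mul,
            Complex.real_smul, Complex.real_smul]
          push_cast
          ring
      _ = (((p.1 ^ (a+b+1) * Real.exp (-m * p.1^2) : ℝ)) : ℂ)
            * Complex.exp (((a:ℂ) - b) * ((p.2:ℂ) * Complex.I)) := by
          rw [← hexp]
          push_cast
          ring
  rw [setIntegral_congr_fun (polarCoord.open_target.measurableSet) e2]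
  rw [polarCoord_target, MeasureTheory.Measure.volume_eq_prod ℝ ℝ,
    setIntegral_prod_mul (fun r : ℝ => (((r ^ (a+b+1) * Real.exp (-m * r^2) : ℝ)) : ℂ))
      (fun θ : ℝ => Complex.exp (((a:ℂ) - b) * ((θ:ℂ) * Complex.I)))
      (Set.Ioi (0:ℝ)) (Set.Ioo (-Real.pi) Real.pi)]
  have hcast : (∫ (x : ℝ) in Set.Ioi 0, ((x ^ (a+b+1) * Real.exp (-m * x^2) : ℝ) : ℂ))
      = ((∫ (x : ℝ) in Set.Ioi 0, x ^ (a+b+1) * Real.exp (-m * x^2) : ℝ) : ℂ) := by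
    exact integral_ofReal
  rw [hcast, angular_integral a b]
  rcases eq_or_ne a b with h | h
  · subst h
    rw [if_pos rfl, if_pos rfl, radial_integral hm (a + a)]
    rw [Complex.real_smul, ← Complex.ofReal_mul, ← Complex.ofReal_mul]
    have hR : (1/Real.pi) * ((m ^ (-(((a+a:ℕ):ℝ)+1+1) / 2) * (1 / 2)
          * Real.Gamma ((((a+a:ℕ):ℝ)+1+1)/2)) * (2 * Real.pi))
        = (a.factorial : ℝ) / m^(a+1) := by
      have h1 : ((((a+a:ℕ)):ℝ)+1+1)/2 = (a:ℝ)+1 := by push_cast; ring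
      have h2 : -((((a+a:ℕ)):ℝ)+1+1) / 2 = -((a+1:ℕ):ℝ) := by push_cast; ring
      rw [h1, h2, Real.Gamma_nat_eq_factorial, Real.rpow_neg hm.le, Real.rpow_natCast]
      have hπ := Real.pi_ne_zero
      have hmne : m ^ (a+1) ≠ 0 := by positivity
      field_simp
    rw [hR]
    push_cast
    ring
  · rw [if_neg h, if_neg h, mul_zero, smul_zero]

/-! #### Integrability -/

lemma integrable_exp_norm_sq {c : ℝ} (hc : 0 < c) :
    Integrable (fun z : ℂ => Real.exp (-c * ‖z‖ ^ 2)) volume := by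
  have h := (GaussianFourier.integrable_cexp_neg_mul_sq_norm_add (V := ℂ) (b := (c:ℂ))
    (by simpa using hc) 0 (0:ℂ)).norm
  apply h.congr
  filter_upwards with z
  rw [Complex.norm_exp]
  congr 1
  rw [show -((c:ℝ):ℂ) * ((‖z‖:ℝ):ℂ) ^ 2 + 0 * ((inner ℝ (0:ℂ) z : ℝ) : ℂ)
      = ((-c * ‖z‖^2 : ℝ) : ℂ) by push_cast; ring]
  exact Complex.ofReal_re _

lemma pointwise_bound (hm : 0 < m) (k : ℕ) {r : ℝ} (hr : 0 ≤ r) :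
    r ^ k * Real.exp (-m * r^2)
      ≤ (1 + k.factorial * (2/m)^k) * Real.exp (-(m/2) * r^2) := by
  have h1 : r ^ k ≤ 1 + (r^2)^k := by
    rcases le_or_gt r 1 with h | h
    · have h2 : r ^ k ≤ 1 := pow_le_one₀ hr h
      have : (0:ℝ) ≤ (r^2)^k := by positivity
      linarith
    · nlinarith [pow_le_pow_right₀ h.le (show k ≤ 2*k by omega), (pow_mul r 2 k)]
  have h2 : ((m/2) * r^2)^k / k.factorial ≤ Real.exp ((m/2) * r^2) :=
    Real.pow_div_factorial_le_exp _ (by positivity) k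
  have hfac : (0:ℝ) < k.factorial := by exact_mod_cast Nat.factorial_pos k
  have h3 : (r^2)^k ≤ k.factorial * (2/m)^k * Real.exp ((m/2) * r^2) := by
    have h2' : ((m/2) * r^2)^k ≤ Real.exp ((m/2) * r^2) * k.factorial :=
      (div_le_iff₀ hfac).mp h2
    have e : (r^2)^k = ((m/2) * r^2)^k * (2/m)^k := by
      rw [← mul_pow]
      congr 1
      field_simp
    rw [e]
    have : (0:ℝ) ≤ (2/m)^k := by positivity
    nlinarith [this, h2']
  have h4 : Real.exp (-m * r^2) ≤ Real.exp (-(m/2) * r^2) := by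
    apply Real.exp_le_exp.mpr
    nlinarith [sq_nonneg r]
  have hexpnn : (0:ℝ) ≤ Real.exp (-m * r^2) := (Real.exp_pos _).le
  calc r ^ k * Real.exp (-m * r^2)
      ≤ (1 + (r^2)^k) * Real.exp (-m * r^2) := by nlinarith [h1]
    _ ≤ Real.exp (-m * r^2)
          + (k.factorial * (2/m)^k * Real.exp ((m/2) * r^2)) * Real.exp (-m * r^2) := by
        nlinarith [h3]
    _ = Real.exp (-m * r^2) + k.factorial * (2/m)^k * Real.exp ((m/2) * r^2 + -m * r^2) := by
        rw [Real.exp_add]; ring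
    _ = Real.exp (-m * r^2) + k.factorial * (2/m)^k * Real.exp (-(m/2) * r^2) := by
        congr 2; ring
    _ ≤ (1 + k.factorial * (2/m)^k) * Real.exp (-(m/2) * r^2) := by
        nlinarith [h4, (Real.exp_pos (-(m/2) * r^2)).le, hfac,
          (show (0:ℝ) ≤ (2/m)^k by positivity)]

lemma integrable_core (hm : 0 < m) (k : ℕ) :
    Integrable (fun z : ℂ =>
      ‖z‖ ^ k * ((1 / Real.pi) * Real.exp (-m * ‖z‖ ^ 2))) volume := by
  have hg : Integrable (fun z : ℂ =>
      ((1/Real.pi) * (1 + k.factorial * (2/m)^k)) * Real.exp (-(m/2) * ‖z‖ ^ 2)) volume :=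
    (integrable_exp_norm_sq (by linarith)).const_mul _
  apply hg.mono
  · exact ((continuous_norm.pow k).mul gaussDensity_cont).aestronglyMeasurable
  · filter_upwards with z
    rw [Real.norm_eq_abs, Real.norm_eq_abs]
    have hb := pointwise_bound hm k (norm_nonneg z)
    have hπ : (0:ℝ) < 1/Real.pi := by positivity
    rw [_root_.abs_of_nonneg (by positivity :
        (0:ℝ) ≤ ‖z‖ ^ k * (1 / Real.pi * Real.exp (-m * ‖z‖ ^ 2))),
      _root_.abs_of_nonneg (by positivity :
        (0:ℝ) ≤ 1 / Real.pi * (1 + (k.factorial:ℝ) * (2 / m) ^ k)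
          * Real.exp (-(m / 2) * ‖z‖ ^ 2))]
    calc ‖z‖ ^ k * (1 / Real.pi * Real.exp (-m * ‖z‖ ^ 2))
        = (1/Real.pi) * (‖z‖ ^ k * Real.exp (-m * ‖z‖ ^ 2)) := by ring
      _ ≤ (1/Real.pi) * ((1 + k.factorial * (2/m)^k) * Real.exp (-(m/2) * ‖z‖ ^ 2)) := by
          apply mul_le_mul_of_nonneg_left _ hπ.le
          exact hb
      _ = 1 / Real.pi * (1 + ↑k.factorial * (2 / m) ^ k)
            * Real.exp (-(m / 2) * ‖z‖ ^ 2) := by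
          ring

lemma gaussMeasure_eq_nnreal :
    gaussMeasure m = volume.withDensity
      (fun z : ℂ => (((1 / Real.pi) * Real.exp (-m * ‖z‖ ^ 2)).toNNReal : ℝ≥0∞)) := rfl

lemma meas_toNNReal_density :
    Measurable fun z : ℂ => ((1 / Real.pi) * Real.exp (-m * ‖z‖ ^ 2)).toNNReal :=
  (continuous_real_toNNReal.comp gaussDensity_cont).measurable

lemma integrable_monomial_gauss (hm : 0 < m) (a b : ℕ) :
    Integrable (fun z : ℂ => z ^ a * (starRingEnd ℂ) z ^ b) (gaussMeasure m) := by
  rw [gaussMeasure_eq_nnreal,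
    integrable_withDensity_iff_integrable_smul₀ meas_toNNReal_density.aemeasurable]
  apply (integrable_core hm (a+b)).mono
  · apply Continuous.aestronglyMeasurable
    exact ((continuous_real_toNNReal.comp gaussDensity_cont).smul
      ((continuous_pow a).mul ((Complex.continuous_conj).pow b)))
  · filter_upwards with z
    rw [NNReal.smul_def, Real.coe_toNNReal _ (gaussDensity_nonneg z)]
    rw [norm_smul, Real.norm_eq_abs, Real.norm_eq_abs,
      _root_.abs_of_nonneg (gaussDensity_nonneg z),
      _root_.abs_of_nonneg (by positivity :
        (0:ℝ) ≤ ‖z‖ ^ (a + b) * (1 / Real.pi * Real.exp (-m * ‖z‖ ^ 2)))]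
    rw [norm_mul, norm_pow, norm_pow, Complex.norm_conj, ← pow_add]
    ring_nf
    exact le_rfl

lemma integrable_abs_pow_gauss (hm : 0 < m) (k : ℕ) :
    Integrable (fun z : ℂ => ‖z‖ ^ k) (gaussMeasure m) := by
  rw [gaussMeasure]
  rw [integrable_withDensity_iff (by
      exact (ENNReal.continuous_ofReal.comp gaussDensity_cont).measurable)
    (by filter_upwards with z; exact ENNReal.ofReal_lt_top)]
  apply (integrable_core hm k).congr
  filter_upwards with z
  rw [ENNReal.toReal_ofReal (gaussDensity_nonneg z)]

lemma memGauss (hm : 0 < m) (j k : ℕ) :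
    MemLp (fun z : ℂ => (starRingEnd ℂ) z ^ j * z ^ k) 2 (gaussMeasure m) := by
  rw [memLp_two_iff_integrable_sq_norm (by
    exact (((Complex.continuous_conj).pow j).mul (continuous_pow k)).aestronglyMeasurable)]
  apply (integrable_abs_pow_gauss hm (2*(j+k))).congr
  filter_upwards with z
  rw [norm_mul, norm_pow, norm_pow, Complex.norm_conj,
    ← pow_add, ← pow_mul]
  ring_nf

/-! #### The Lp layer -/

/-- The monomial `z̄^j z^k` as an element of `L²(μ_m)`. -/
def monoLp (hm : 0 < m) (j k : ℕ) : Lp2 m := (memGauss hm j k).toLp _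

lemma inner_monoLp (hm : 0 < m) (a b c d : ℕ) :
    ⟪monoLp hm a b, monoLp hm c d⟫
      = if a + d = b + c then (((a+d).factorial : ℂ) / (m:ℂ)^(a+d+1)) else 0 := by
  rw [MeasureTheory.L2.inner_def]
  rw [integral_congr_ae (g := fun z : ℂ => z ^ (a+d) * (starRingEnd ℂ) z ^ (b+c)) (by
    filter_upwards [(memGauss hm a b).coeFn_toLp, (memGauss hm c d).coeFn_toLp] with z h1 h2
    rw [show (monoLp hm a b : ℂ → ℂ) z = ((memGauss hm a b).toLp _ : ℂ → ℂ) z from rfl,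
      show (monoLp hm c d : ℂ → ℂ) z = ((memGauss hm c d).toLp _ : ℂ → ℂ) z from rfl, h1, h2,
      RCLike.inner_apply]
    simp only [map_mul, map_pow, Complex.conj_conj, RingHomCompTriple.comp_apply, RingHom.id_apply]
    rw [pow_add, pow_add]
    ring)]
  exact integral_monomial hm (a+d) (b+c)

lemma monoLp_mem_polyFock (hm : 0 < m) {N j : ℕ} (k : ℕ) (hj : j < N) :
    monoLp hm j k ∈ polyFock m N :=
  Submodule.le_topologicalClosure _
    (Submodule.subset_span ⟨j, k, hj, (memGauss hm j k).coeFn_toLp⟩)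

lemma orth_polyFock (hm : 0 < m) {N : ℕ} {v : Lp2 m}
    (hv : ∀ j k : ℕ, j < N → ⟪v, monoLp hm j k⟫ = 0) :
    ∀ w ∈ polyFock m N, ⟪v, w⟫ = 0 := by
  set S : Set (Lp2 m) := {f : Lp2 m | ∃ j k : ℕ, j < N ∧
      (f : ℂ → ℂ) =ᵐ[gaussMeasure m] fun z => (starRingEnd ℂ) z ^ j * z ^ k} with hS
  have hspan : ∀ u ∈ Submodule.span ℂ S, ⟪v, u⟫ = 0 := by
    intro u hu
    induction hu using Submodule.span_induction with
    | mem f hf =>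
      obtain ⟨j, k, hj, hfe⟩ := hf
      have : f = monoLp hm j k :=
        MeasureTheory.Lp.ext (hfe.trans (memGauss hm j k).coeFn_toLp.symm)
      rw [this]
      exact hv j k hj
    | zero => exact inner_zero_right v
    | add x y _ _ hx hy => rw [inner_add_right, hx, hy, add_zero]
    | smul c x _ hx => rw [inner_smul_right, hx, mul_zero]
  have hvK : v ∈ (Submodule.span ℂ S)ᗮ := (Submodule.mem_orthogonal' _ v).mpr hspan
  have hEq : (Submodule.span ℂ S)ᗮ = ((Submodule.span ℂ S).topologicalClosure)ᗮ := by
    rw [← Submodule.orthogonal_orthogonal_eq_closure, Submodule.triorthogonal_eq_orthogonal]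
  rw [hEq] at hvK
  intro w hw
  exact (Submodule.mem_orthogonal' _ v).mp hvK w hw

/-- The coefficients of the complex Hermite polynomial `H_{N,n}`. -/
def coefH (m : ℝ) (N n l : ℕ) : ℂ :=
  (-1)^l * ((l.factorial * N.choose l * n.choose l : ℕ) : ℂ) / ((m : ℂ))^l

lemma coefH_conj (N n l : ℕ) : (starRingEnd ℂ) (coefH m N n l) = coefH m N n l := by
  simp only [coefH, map_div₀, map_mul, map_pow, map_neg, map_one, map_natCast,
    Complex.conj_ofReal]

lemma coefH_zero (N n : ℕ) : coefH m N n 0 = 1 := by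
  simp [coefH]

/-- The residual element `H_{N,n}` in `L²(μ_m)`. -/
def HnE (hm : 0 < m) (N n : ℕ) : Lp2 m :=
  ∑ l ∈ Finset.range (min N n + 1), coefH m N n l • monoLp hm (N-l) (n-l)

lemma inner_HnE_monoLp (hm : 0 < m) {N : ℕ} (hN : 1 ≤ N) (n j k : ℕ) (hj : j ≤ N) :
    ⟪HnE hm N n, monoLp hm j k⟫
      = if j = N ∧ k = n
          then ((n.factorial : ℂ) * (N.factorial : ℂ)) / (m:ℂ)^(n+N+1) else 0 := by
  have hmC : ((m:ℂ)) ≠ 0 := Complex.ofReal_ne_zero.mpr hm.ne'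
  rw [HnE, sum_inner]
  rw [Finset.sum_congr rfl (fun l _ => by
    rw [inner_smul_left, coefH_conj, inner_monoLp])]
  by_cases hC : N + k = n + j
  · have hNnj : N ≤ n + j := by omega
    have hsum : ∑ l ∈ range (min N n + 1), coefH m N n l *
          (if (N-l) + k = (n-l) + j
            then ((((N-l)+k).factorial : ℂ) / (m:ℂ)^((N-l)+k+1)) else 0)
        = (∑ l ∈ range (min N n + 1),
            (-1:ℂ)^l * ((l.factorial : ℂ) * (N.choose l) * (n.choose l))
              * ((n+j-l).factorial : ℂ)) / (m:ℂ)^(n+j+1) := by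
      rw [Finset.sum_div]
      apply Finset.sum_congr rfl
      intro l hl
      simp only [Finset.mem_range] at hl
      have hl1 : l ≤ N := by omega
      have hl2 : l ≤ n := by omega
      have e1 : (N-l)+k = n+j-l := by omega
      rw [if_pos (by omega), e1, coefH]
      rw [div_mul_div_comm, ← pow_add, show l + (n+j-l+1) = n+j+1 by omega]
      push_cast
      ring
    rw [hsum]
    have hB := lemB (N := N) (n := n) (j := j) hN hj hNnj
    have hBC : (∑ l ∈ range (min N n + 1),
          (-1:ℂ)^l * ((l.factorial : ℂ) * (N.choose l) * (n.choose l))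
            * ((n+j-l).factorial : ℂ))
        = if j = N then ((n.factorial : ℂ) * (N.factorial : ℂ)) else 0 := by
      have hc := congrArg (fun x : ℤ => (x : ℂ)) hB
      push_cast at hc
      convert hc using 2
    rw [hBC]
    by_cases hjN : j = N
    · subst hjN
      have hkn : k = n := by omega
      subst hkn
      rw [if_pos rfl, if_pos ⟨rfl, rfl⟩]
    · rw [if_neg hjN, if_neg (by rintro ⟨h1, _⟩; exact hjN h1), zero_div]
  · rw [Finset.sum_eq_zero, if_neg (by rintro ⟨rfl, rfl⟩; omega)]
    intro l hl
    simp only [Finset.mem_range] at hl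
    rw [if_neg (by omega), mul_zero]

lemma HnE_decomp (hm : 0 < m) (N n : ℕ) :
    HnE hm N n = (∑ l ∈ Finset.range (min N n),
        coefH m N n (l+1) • monoLp hm (N-(l+1)) (n-(l+1))) + monoLp hm N n := by
  rw [HnE, Finset.sum_range_succ']
  congr 1
  rw [coefH_zero, one_smul]
  norm_num

lemma q_mem_polyFock (hm : 0 < m) {N : ℕ} (hN : 1 ≤ N) (n : ℕ) :
    (∑ l ∈ Finset.range (min N n),
        coefH m N n (l+1) • monoLp hm (N-(l+1)) (n-(l+1))) ∈ polyFock m N :=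
  Submodule.sum_mem _ fun l _ =>
    Submodule.smul_mem _ _ (monoLp_mem_polyFock hm _ (by omega))

lemma HnE_orth (hm : 0 < m) {N : ℕ} (hN : 1 ≤ N) (n : ℕ) :
    ∀ w ∈ polyFock m N, ⟪HnE hm N n, w⟫ = 0 := by
  apply orth_polyFock hm
  intro j k hj
  rw [inner_HnE_monoLp hm hN n j k hj.le, if_neg (by rintro ⟨rfl, _⟩; omega)]

lemma proj_monoLp (hm : 0 < m) {N : ℕ} (hN : 1 ≤ N) (n : ℕ) :
    (((polyFock m N).orthogonalProjectionOnto (monoLp hm N n)) : Lp2 m)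
      = monoLp hm N n - HnE hm N n := by
  rw [Submodule.coe_orthogonalProjectionOnto_apply]
  apply Submodule.eq_starProjection_of_mem_of_inner_eq_zero
  · rw [show monoLp hm N n - HnE hm N n
        = -(∑ l ∈ Finset.range (min N n),
            coefH m N n (l+1) • monoLp hm (N-(l+1)) (n-(l+1))) by
      rw [HnE_decomp hm N n]; abel]
    exact Submodule.neg_mem _ (q_mem_polyFock hm hN n)
  · intro w hw
    rw [sub_sub_cancel]
    exact HnE_orth hm hN n w hw

lemma inner_HnE_HnE (hm : 0 < m) {N : ℕ} (hN : 1 ≤ N) (n n' : ℕ) :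
    ⟪HnE hm N n, HnE hm N n'⟫
      = if n' = n then ((n.factorial : ℂ) * (N.factorial : ℂ)) / (m:ℂ)^(n+N+1) else 0 := by
  rw [HnE_decomp hm N n', inner_add_right, inner_sum]
  rw [Finset.sum_eq_zero (fun l hl => by
    rw [inner_smul_right, inner_HnE_monoLp hm hN n _ _ (by omega),
      if_neg (by rintro ⟨h1, _⟩; simp only [Finset.mem_range] at hl; omega), mul_zero]), zero_add]
  rw [inner_HnE_monoLp hm hN n N n' le_rfl]
  by_cases h : n' = n
  · rw [if_pos ⟨rfl, h⟩, if_pos h]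
  · rw [if_neg (by rintro ⟨_, h2⟩; exact h h2), if_neg h]

lemma normSq_HnE (hm : 0 < m) {N : ℕ} (hN : 1 ≤ N) (n : ℕ) :
    ‖HnE hm N n‖^2 = ((n.factorial : ℝ) * (N.factorial : ℝ)) / m^(n+N+1) := by
  have h := inner_HnE_HnE hm hN n n
  rw [if_pos rfl] at h
  have h2 : (⟪HnE hm N n, HnE hm N n⟫ : ℂ) = ((‖HnE hm N n‖ : ℝ) : ℂ)^2 :=
    inner_self_eq_norm_sq_to_K (𝕜 := ℂ) _
  rw [h] at h2
  have h4 : (((n.factorial * N.factorial : ℝ) / m^(n+N+1) : ℝ) : ℂ)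
      = ((‖HnE hm N n‖^2 : ℝ) : ℂ) := by
    rw [Complex.ofReal_pow, ← h2]
    push_cast
    ring
  have h5 := Complex.ofReal_injective h4
  rw [← h5]

/-- Norm-squared of an orthogonal combination. -/
lemma normSq_sum_smul (hm : 0 < m) {d : ℕ} (v : ℕ → Lp2 m) (c : ℕ → ℂ) (r : ℕ → ℝ)
    (horth : ∀ n n', n' ≠ n → ⟪v n, v n'⟫ = 0)
    (hself : ∀ n, ⟪v n, v n⟫ = ((r n : ℝ) : ℂ)) :
    ‖∑ n ∈ Finset.range d, c n • v n‖^2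
      = ∑ n ∈ Finset.range d, Complex.normSq (c n) * r n := by
  have hin : ⟪∑ n ∈ Finset.range d, c n • v n, ∑ n ∈ Finset.range d, c n • v n⟫
      = ∑ n ∈ Finset.range d, ((Complex.normSq (c n) * r n : ℝ) : ℂ) := by
    rw [sum_inner]
    apply Finset.sum_congr rfl
    intro n hn
    rw [inner_smul_left, inner_sum]
    rw [Finset.sum_eq_single n
      (fun n' _ hne => by rw [inner_smul_right, horth n n' hne, mul_zero])
      (fun hne => absurd hn hne)]
    rw [inner_smul_right, hself n]
    rw [show (starRingEnd ℂ) (c n) * (c n * ((r n : ℝ):ℂ))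
        = (c n * (starRingEnd ℂ) (c n)) * ((r n : ℝ):ℂ) by ring, Complex.mul_conj,
      ← Complex.ofReal_mul]
  have h2 : (⟪∑ n ∈ Finset.range d, c n • v n, ∑ n ∈ Finset.range d, c n • v n⟫ : ℂ)
      = ((‖∑ n ∈ Finset.range d, c n • v n‖ : ℝ) : ℂ)^2 :=
    inner_self_eq_norm_sq_to_K (𝕜 := ℂ) _
  rw [hin] at h2
  exact_mod_cast h2.symm

/-- Identification of `toLp` of a sum of monomial functions. -/
lemma toLp_sum_mono (hm : 0 < m) (N : ℕ) (c : ℕ → ℂ) (d : ℕ)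
    (hmem : MemLp (fun z : ℂ =>
      ∑ n ∈ Finset.range d, c n * ((starRingEnd ℂ) z ^ N * z ^ n)) 2 (gaussMeasure m)) :
    hmem.toLp _ = ∑ n ∈ Finset.range d, c n • monoLp hm N n := by
  induction d with
  | zero =>
    rw [Finset.sum_range_zero]
    have h0 : (fun z : ℂ => ∑ n ∈ Finset.range 0, c n * ((starRingEnd ℂ) z ^ N * z ^ n))
        = (fun _ : ℂ => (0:ℂ)) := by
      funext z; simp
    rw [MemLp.toLp_congr hmem MemLp.zero (Filter.EventuallyEq.of_eq h0)]
    exact MemLp.toLp_zero _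
  | succ d ih =>
    have hmem1 : MemLp (fun z : ℂ =>
        ∑ n ∈ Finset.range d, c n * ((starRingEnd ℂ) z ^ N * z ^ n)) 2 (gaussMeasure m) :=
      memLp_finset_sum (Finset.range d) (fun n _ => (memGauss hm N n).const_mul (c n))
    have hmem2 : MemLp (fun z : ℂ => c d * ((starRingEnd ℂ) z ^ N * z ^ d)) 2 (gaussMeasure m) :=
      (memGauss hm N d).const_mul (c d)
    have hs : (fun z : ℂ => ∑ n ∈ Finset.range (d+1), c n * ((starRingEnd ℂ) z ^ N * z ^ n))
        = (fun z : ℂ => (∑ n ∈ Finset.range d, c n * ((starRingEnd ℂ) z ^ N * z ^ n))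
            + c d * ((starRingEnd ℂ) z ^ N * z ^ d)) := by
      funext z; rw [Finset.sum_range_succ]
    rw [MemLp.toLp_congr hmem (hmem1.add hmem2) (Filter.EventuallyEq.of_eq hs),
      MemLp.toLp_add hmem1 hmem2, ih hmem1, Finset.sum_range_succ]
    have hlast : (MemLp.toLp (fun z : ℂ => c d * ((starRingEnd ℂ) z ^ N * z ^ d)) hmem2 : Lp2 m)
        = c d • monoLp hm N d := MemLp.toLp_const_smul (c d) (memGauss hm N d)
    rw [hlast]

end Aux

/-- For every `n ≥ N`, `‖H̃^N_{z̄^N} e_n‖² = N!/m^N`; consequently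
`H̃^N_{z̄^N}` extends to a bounded operator from `𝓕_m` to `L²(μ_m)`. -/
theorem tildeH_critical_norm_sq (m : ℝ) (hm : 0 < m) (N : ℕ) (hN : 1 ≤ N)
    (h : ∀ n : ℕ, MemLp (fun z : ℂ => (starRingEnd ℂ) (z ^ N) * (fockBasisPoly m n).eval z) 2
      (gaussMeasure m)) :
    (∀ n : ℕ, N ≤ n →
        ‖tildeH m N (fun z => z ^ N) (fockBasisPoly m n) (h n)‖ ^ 2 =
          (Nat.factorial N : ℝ) / m ^ N) ∧
      ∃ C : ℝ, 0 ≤ C ∧ ∀ (p : Polynomial ℂ)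
        (h1 : MemLp (fun z : ℂ => (starRingEnd ℂ) (z ^ N) * p.eval z) 2 (gaussMeasure m))
        (h2 : MemLp (fun z : ℂ => p.eval z) 2 (gaussMeasure m)),
        ‖tildeH m N (fun z => z ^ N) p h1‖ ≤ C * ‖h2.toLp _‖ := by
  have hm0 : m ≠ 0 := hm.ne'
  have hmC : (m:ℂ) ≠ 0 := Complex.ofReal_ne_zero.mpr hm.ne'
  have hfacpos : ∀ k : ℕ, (0:ℝ) < k.factorial := fun k => by exact_mod_cast Nat.factorial_pos k
  have key : ∀ (p : Polynomial ℂ)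
      (h1 : MemLp (fun z : ℂ => (starRingEnd ℂ) (z ^ N) * p.eval z) 2 (gaussMeasure m)),
      tildeH m N (fun z => z ^ N) p h1
        = ∑ n ∈ Finset.range (p.natDegree + 1), p.coeff n • HnE hm N n := by
    intro p h1
    have hfun : (fun z : ℂ => (starRingEnd ℂ) (z ^ N) * p.eval z)
        = fun z : ℂ => ∑ n ∈ Finset.range (p.natDegree+1),
            p.coeff n * ((starRingEnd ℂ) z ^ N * z ^ n) := by
      funext z
      rw [Polynomial.eval_eq_sum_range, Finset.mul_sum]
      apply Finset.sum_congr rfl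
      intro n _
      rw [map_pow]
      ring
    have hmem : MemLp (fun z : ℂ => ∑ n ∈ Finset.range (p.natDegree+1),
        p.coeff n * ((starRingEnd ℂ) z ^ N * z ^ n)) 2 (gaussMeasure m) := hfun ▸ h1
    have htoLp : h1.toLp _ = ∑ n ∈ Finset.range (p.natDegree+1), p.coeff n • monoLp hm N n := by
      rw [MemLp.toLp_congr h1 hmem (Filter.EventuallyEq.of_eq hfun)]
      exact toLp_sum_mono hm N _ _ hmem
    unfold tildeH
    rw [htoLp]
    have hproj : (((polyFock m N).orthogonalProjectionOnto
          (∑ n ∈ Finset.range (p.natDegree+1), p.coeff n • monoLp hm N n)) : Lp2 m)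
        = ∑ n ∈ Finset.range (p.natDegree+1),
            p.coeff n • (((polyFock m N).orthogonalProjectionOnto (monoLp hm N n) : Lp2 m)) := by
      rw [map_sum, Submodule.coe_sum]
      apply Finset.sum_congr rfl
      intro n _
      rw [_root_.map_smul, Submodule.coe_smul]
    rw [hproj, ← Finset.sum_sub_distrib]
    apply Finset.sum_congr rfl
    intro n _
    rw [proj_monoLp hm hN n, ← smul_sub, sub_sub_cancel]
  have hnormsq : ∀ (p : Polynomial ℂ)
      (h1 : MemLp (fun z : ℂ => (starRingEnd ℂ) (z ^ N) * p.eval z) 2 (gaussMeasure m)),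
      ‖tildeH m N (fun z => z ^ N) p h1‖^2
        = ∑ n ∈ Finset.range (p.natDegree + 1),
            Complex.normSq (p.coeff n) * (((n.factorial : ℝ) * N.factorial) / m^(n+N+1)) := by
    intro p h1
    rw [key p h1]
    apply normSq_sum_smul hm (HnE hm N) _ _
      (fun n n' hne => by rw [inner_HnE_HnE hm hN n n', if_neg hne])
      (fun n => by rw [inner_HnE_HnE hm hN n n, if_pos rfl]; push_cast; ring)
  constructor
  · intro n hn
    set cR : ℝ := m ^ (((n:ℝ)+1)/2) / Real.sqrt n.factorial with hcRdef
    have hcR : 0 < cR := by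
      apply div_pos (Real.rpow_pos_of_pos hm _)
      exact Real.sqrt_pos.mpr (hfacpos n)
    have hcne : ((cR : ℝ) : ℂ) ≠ 0 := Complex.ofReal_ne_zero.mpr hcR.ne'
    have hdeg : (fockBasisPoly m n).natDegree = n := by
      rw [fockBasisPoly, Polynomial.natDegree_C_mul_X_pow n _ hcne]
    have hcoeff : ∀ k, (fockBasisPoly m n).coeff k = if k = n then ((cR:ℝ):ℂ) else 0 := by
      intro k
      rw [fockBasisPoly, Polynomial.coeff_C_mul, Polynomial.coeff_X_pow]
      split
      · rw [hcRdef]; push_cast; ring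
      · ring
    rw [hnormsq (fockBasisPoly m n) (h n), hdeg]
    rw [Finset.sum_eq_single n (fun k _ hkn => by
        rw [hcoeff k, if_neg hkn]
        simp)
      (fun hnn => absurd (Finset.mem_range.mpr (by omega)) hnn)]
    rw [hcoeff n, if_pos rfl, Complex.normSq_ofReal]
    have hcR2 : cR * cR = m^(n+1) / n.factorial := by
      have hs : Real.sqrt n.factorial * Real.sqrt n.factorial = (n.factorial : ℝ) :=
        Real.mul_self_sqrt (hfacpos n).le
      have hr : (m ^ (((n:ℝ)+1)/2)) * (m ^ (((n:ℝ)+1)/2)) = m^(n+1) := by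
        rw [← Real.rpow_add hm,
          show ((n:ℝ)+1)/2 + ((n:ℝ)+1)/2 = ((n+1:ℕ):ℝ) by push_cast; ring,
          Real.rpow_natCast]
      rw [hcRdef, div_mul_div_comm, hs, hr]
    rw [hcR2]
    have hpow : m^(n+N+1) = m^N * m^(n+1) := by rw [← pow_add]; congr 1; omega
    rw [hpow]
    have h1 : m^(n+1) ≠ 0 := by positivity
    have h2 : m^N ≠ 0 := by positivity
    field_simp
  · refine ⟨Real.sqrt ((N.factorial : ℝ) / m^N), Real.sqrt_nonneg _, ?_⟩
    intro p h1 h2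
    have hfun2 : (fun z : ℂ => p.eval z)
        = fun z : ℂ => ∑ n ∈ Finset.range (p.natDegree+1),
            p.coeff n * ((starRingEnd ℂ) z ^ 0 * z ^ n) := by
      funext z
      rw [Polynomial.eval_eq_sum_range]
      apply Finset.sum_congr rfl
      intro n _
      rw [pow_zero, one_mul]
    have hmem2 : MemLp (fun z : ℂ => ∑ n ∈ Finset.range (p.natDegree+1),
        p.coeff n * ((starRingEnd ℂ) z ^ 0 * z ^ n)) 2 (gaussMeasure m) := hfun2 ▸ h2
    have htoLp2 : h2.toLp _ = ∑ n ∈ Finset.range (p.natDegree+1), p.coeff n • monoLp hm 0 n := by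
      rw [MemLp.toLp_congr h2 hmem2 (Filter.EventuallyEq.of_eq hfun2)]
      exact toLp_sum_mono hm 0 _ _ hmem2
    have hB : ‖h2.toLp _‖^2 = ∑ n ∈ Finset.range (p.natDegree+1),
        Complex.normSq (p.coeff n) * ((n.factorial : ℝ)/m^(n+1)) := by
      rw [htoLp2]
      apply normSq_sum_smul hm (fun n => monoLp hm 0 n) _ _
        (fun n n' hne => by rw [inner_monoLp hm 0 n 0 n', if_neg (by omega)])
        (fun n => by
          rw [inner_monoLp hm 0 n 0 n, if_pos (by omega)]
          push_cast
          norm_num)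
    have hcomb : ‖tildeH m N (fun z => z ^ N) p h1‖^2
        = ((N.factorial:ℝ)/m^N) * ‖h2.toLp _‖^2 := by
      rw [hnormsq p h1, hB, Finset.mul_sum]
      apply Finset.sum_congr rfl
      intro n _
      have hpow : m^(n+N+1) = m^N * m^(n+1) := by rw [← pow_add]; congr 1; omega
      rw [hpow]
      have hne1 : m^(n+1) ≠ 0 := by positivity
      have hne2 : m^N ≠ 0 := by positivity
      field_simp
    have heq : ‖tildeH m N (fun z => z ^ N) p h1‖
        = Real.sqrt (((N.factorial:ℝ)/m^N) * ‖h2.toLp _‖^2) := by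
      rw [← hcomb, Real.sqrt_sq (norm_nonneg _)]
    rw [heq, Real.sqrt_mul (by positivity) _, Real.sqrt_sq (norm_nonneg _)]
end
end
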